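/- Let K be a finite simplicial complex and L a non-contractible compact metric ANR. If X and Y are compact (Hausdorff) spaces and dim X = 0 (Lebesgue covering dimension), then: (a) K-Ind (X × Y) = K-Ind Y; (b) K-str (X × Y) = K-str Y; (c) L-Ind (X × Y) = L-Ind Y. -/

import Mathlib

open Set Topology Cardinal

noncomputable section

attribute [local instance] Classical.propDecidable

/-- Values of dimension functions: `⊥ : WithBot Ordinal.{0}` encodes `−1`,
ordinals are the usual values, and `⊤` encodes `∞`. -/
abbrev Dim : Type 1 := WithTop (WithBot Ordinal.{0})

/-- An ordinal viewed as a dimension value. -/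
def Dim.ofOrdinal (a : Ordinal.{0}) : Dim := ((a : WithBot Ordinal.{0}) : Dim)

/-- The dimension value `−1`. -/
def Dim.minusOne : Dim := ((⊥ : WithBot Ordinal.{0}) : Dim)

/-- An integer `m ≥ −1` viewed as a dimension value. -/
def Dim.ofInt (m : ℤ) : Dim := if 0 ≤ m then Dim.ofOrdinal m.toNat else Dim.minusOne

/-- `A` is a `K`-tuple for the simplicial complex `K` on the vertex set `Fin m`:
whenever the members indexed by a nonempty `I` have a common point, `I` spans a
simplex of `K`. -/
def IsKTuple {m : ℕ} (K : Finset (Fin m) → Prop) {X : Type} (A : Fin m → Set X) : Prop :=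
  ∀ I : Finset (Fin m), I.Nonempty → (⋂ i ∈ I, A i).Nonempty → K I

/-- `K` is an abstract (finite) simplicial complex with vertex set `Fin m`:
it is closed under passing to nonempty subsets, and contains every vertex. -/
def IsComplex {m : ℕ} (K : Finset (Fin m) → Prop) : Prop :=
  (∀ s t : Finset (Fin m), s ⊆ t → s.Nonempty → K t → K s) ∧ ∀ i, K {i}

/-- The boundary complex `∂Δ^k` of the `k`-simplex: all proper subsets of the
`k+1` vertices span simplices. -/
def bComplex (k : ℕ) : Finset (Fin (k + 1)) → Prop := fun s => s ≠ Finset.univ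

/-- `U` is an (open) `K`-neighbourhood of the tuple `F`. -/
def KNbhd {m : ℕ} (K : Finset (Fin m) → Prop) {X : Type} [TopologicalSpace X]
    (F U : Fin m → Set X) : Prop :=
  (∀ i, IsOpen (U i)) ∧ IsKTuple K U ∧ ∀ i, F i ⊆ U i

/-- Auxiliary form of `K-Ind X ≤ α`, defined by transfinite recursion on `α`:
every closed `K`-tuple has a `K`-neighbourhood whose corresponding `K`-partition
is either empty (dimension `−1`) or has `K-Ind < α`. -/
def KIndLeAux {m : ℕ} (K : Finset (Fin m) → Prop) :
    Ordinal.{0} → ∀ X : Type, TopologicalSpace X → Prop :=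
  (wellFounded_lt (α := Ordinal.{0})).fix fun α rec X tX =>
    letI := tX
    ∀ F : Fin m → Set X, (∀ i, IsClosed (F i)) → IsKTuple K F →
      ∃ U : Fin m → Set X, (∀ i, IsOpen (U i)) ∧ IsKTuple K U ∧ (∀ i, F i ⊆ U i) ∧
        ((⋃ i, U i)ᶜ = (∅ : Set X) ∨
          ∃ β : Set.Iio α, rec β.1 β.2 (↥((⋃ i, U i)ᶜ)) inferInstance)

/-- `K-Ind X ≤ α` (for an ordinal `α ≥ 0`). -/
def KIndLE {m : ℕ} (K : Finset (Fin m) → Prop) (X : Type) [tX : TopologicalSpace X]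
    (α : Ordinal.{0}) : Prop :=
  KIndLeAux K α X tX

/-- Fedorchuk's inductive dimension `K-Ind` modulo a simplicial complex `K`;
`−1` for the empty space, the least `α` with `K-Ind X ≤ α` otherwise, `∞` if none. -/
def KInd {m : ℕ} (K : Finset (Fin m) → Prop) (X : Type) [TopologicalSpace X] : Dim :=
  if IsEmpty X then Dim.minusOne
  else if ∃ α, KIndLE K X α then Dim.ofOrdinal (sInf {α | KIndLE K X α}) else ⊤

/-- The set of `K`-obstruction points of an open `K`-tuple `U`: points covered
by no `K`-neighbourhood of `U`. -/
def KObs {m : ℕ} (K : Finset (Fin m) → Prop) {X : Type} [TopologicalSpace X]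
    (U : Fin m → Set X) : Set X :=
  {x | ¬ ∃ V : Fin m → Set X, KNbhd K U V ∧ x ∈ ⋃ i, V i}

/-- `X` is strongly `α`-dimensional: `K-Ind X` is a positive ordinal `α` and some
closed `K`-tuple admits no `K`-neighbourhood `U` without obstruction points whose
corresponding `K`-partition has `K-Ind < α`. -/
def KStrongly {m : ℕ} (K : Finset (Fin m) → Prop) (X : Type) [TopologicalSpace X] : Prop :=
  (∃ α : Ordinal.{0}, 0 < α ∧ KInd K X = Dim.ofOrdinal α) ∧
  ∃ F : Fin m → Set X, (∀ i, IsClosed (F i)) ∧ IsKTuple K F ∧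
    ∀ U : Fin m → Set X, KNbhd K F U →
      KInd K (↥((⋃ i, U i)ᶜ)) < KInd K X → KObs K U ≠ ∅

/-- The dimensional strength degree `K-str X ∈ {0,1}`. -/
def KStr {m : ℕ} (K : Finset (Fin m) → Prop) (X : Type) [TopologicalSpace X] : ℕ :=
  if KStrongly K X then 1 else 0

/-- `K-dim X ≤ n`: any `n+1` closed `K`-tuples admit `K`-partitions with empty
intersection. -/
def KDimLE {m : ℕ} (K : Finset (Fin m) → Prop) (X : Type) [TopologicalSpace X] (n : ℕ) : Prop :=
  ∀ F : Fin (n + 1) → Fin m → Set X,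
    (∀ j i, IsClosed (F j i)) → (∀ j, IsKTuple K (F j)) →
    ∃ U : Fin (n + 1) → Fin m → Set X, (∀ j, KNbhd K (F j) (U j)) ∧
      (⋂ j, (⋃ i, U j i)ᶜ) = (∅ : Set X)

/-- Fedorchuk's dimension `K-dim` modulo a simplicial complex `K`. -/
def KDim {m : ℕ} (K : Finset (Fin m) → Prop) (X : Type) [TopologicalSpace X] : Dim :=
  if IsEmpty X then Dim.minusOne
  else if ∃ n, KDimLE K X n then Dim.ofOrdinal ((sInf {n | KDimLE K X n} : ℕ) : Ordinal.{0}) else ⊤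

/-- `dim X ≤ n` for the Lebesgue covering dimension: every finite open cover has
an open shrinking of order at most `n+1`. -/
def CovDimLE (X : Type) [TopologicalSpace X] (n : ℕ) : Prop :=
  ∀ (ι : Type), Finite ι → ∀ U : ι → Set X, (∀ i, IsOpen (U i)) → (⋃ i, U i) = Set.univ →
    ∃ V : ι → Set X, (∀ i, IsOpen (V i)) ∧ (∀ i, V i ⊆ U i) ∧ (⋃ i, V i) = Set.univ ∧
      ∀ x : X, ({i | x ∈ V i}).ncard ≤ n + 1

/-- The Lebesgue covering dimension. -/
def covDim (X : Type) [TopologicalSpace X] : Dim :=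
  if IsEmpty X then Dim.minusOne
  else if ∃ n, CovDimLE X n then Dim.ofOrdinal ((sInf {n | CovDimLE X n} : ℕ) : Ordinal.{0}) else ⊤

/-- `Ind X ≤ n` for the large inductive dimension, by recursion on `n`. -/
def IndLE : ℕ → ∀ X : Type, TopologicalSpace X → Prop
  | 0, X, tX =>
    letI := tX
    ∀ F U : Set X, IsClosed F → IsOpen U → F ⊆ U →
      ∃ V : Set X, IsOpen V ∧ F ⊆ V ∧ V ⊆ U ∧ frontier V = ∅
  | n + 1, X, tX =>
    letI := tX
    ∀ F U : Set X, IsClosed F → IsOpen U → F ⊆ U →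
      ∃ V : Set X, IsOpen V ∧ F ⊆ V ∧ V ⊆ U ∧ IndLE n (↥(frontier V)) inferInstance

/-- The large inductive dimension `Ind`. -/
def IndDim (X : Type) [tX : TopologicalSpace X] : Dim :=
  if IsEmpty X then Dim.minusOne
  else if ∃ n, IndLE n X tX then Dim.ofOrdinal ((sInf {n | IndLE n X tX} : ℕ) : Ordinal.{0}) else ⊤

/-- The relation generating the topological join `A ∗ B`: the copy of `B` is
collapsed at parameter `0`, the copy of `A` at parameter `1`. -/
def JoinRel (A B : Type) : (A × B × unitInterval) → (A × B × unitInterval) → Prop :=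
  fun p q => (p.2.2 = 0 ∧ q.2.2 = 0 ∧ p.1 = q.1) ∨ (p.2.2 = 1 ∧ q.2.2 = 1 ∧ p.2.1 = q.2.1)

/-- The topological join `A ∗ B`. -/
abbrev Join (A B : Type) [TopologicalSpace A] [TopologicalSpace B] : Type :=
  Quot (JoinRel A B)

/-- Auxiliary construction of the join of `n+1` copies of `L`, bundled with its
topology. -/
def JoinPowAux (L : Type) (tL : TopologicalSpace L) : ℕ → (T : Type) × TopologicalSpace T
  | 0 => ⟨L, tL⟩
  | n + 1 =>
    let p := JoinPowAux L tL n
    letI := tL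
    letI := p.2
    ⟨Join L p.1, inferInstance⟩

/-- The join `L ∗ ⋯ ∗ L` of `n+1` copies of `L`. -/
def JoinPow (L : Type) [tL : TopologicalSpace L] (n : ℕ) : Type :=
  (JoinPowAux L tL n).1

instance joinPowTopologicalSpace (L : Type) [tL : TopologicalSpace L] (n : ℕ) :
    TopologicalSpace (JoinPow L n) :=
  (JoinPowAux L tL n).2

/-- `L-dim X ≤ n`: every continuous map from a closed subset of `X` to the join
of `n+1` copies of `L` extends continuously over `X`. -/
def LDimLE (L : Type) [TopologicalSpace L] (X : Type) [TopologicalSpace X] (n : ℕ) : Prop :=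
  ∀ F : Set X, IsClosed F → ∀ f : C(F, JoinPow L n),
    ∃ g : C(X, JoinPow L n), ∀ x : F, g x = f x

/-- Fedorchuk's dimension `L-dim` modulo an ANR `L`. -/
def LDim (L : Type) [TopologicalSpace L] (X : Type) [TopologicalSpace X] : Dim :=
  if IsEmpty X then Dim.minusOne
  else if ∃ n, LDimLE L X n then Dim.ofOrdinal ((sInf {n | LDimLE L X n} : ℕ) : Ordinal.{0}) else ⊤

/-- Auxiliary form of `L-Ind X ≤ α`, by transfinite recursion on `α`: every map
to `L` from a closed subset of `X` has an `L`-partition which is either empty or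
has `L-Ind < α`. -/
def LIndLeAux (L : Type) [TopologicalSpace L] :
    Ordinal.{0} → ∀ X : Type, TopologicalSpace X → Prop :=
  (wellFounded_lt (α := Ordinal.{0})).fix fun α rec X tX =>
    letI := tX
    ∀ F : Set X, IsClosed F → ∀ f : C(F, L),
      ∃ U : Set X, IsOpen U ∧ ∃ hFU : F ⊆ U,
        (∃ g : C(U, L), ∀ (x : X) (hx : x ∈ F), g ⟨x, hFU hx⟩ = f ⟨x, hx⟩) ∧
        (Uᶜ = (∅ : Set X) ∨ ∃ β : Set.Iio α, rec β.1 β.2 (↥(Uᶜ)) inferInstance)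

/-- `L-Ind X ≤ α` (for an ordinal `α ≥ 0`). -/
def LIndLE (L : Type) [TopologicalSpace L] (X : Type) [tX : TopologicalSpace X]
    (α : Ordinal.{0}) : Prop :=
  LIndLeAux L α X tX

/-- Fedorchuk's inductive dimension `L-Ind` modulo an ANR `L`. -/
def LInd (L : Type) [TopologicalSpace L] (X : Type) [TopologicalSpace X] : Dim :=
  if IsEmpty X then Dim.minusOne
  else if ∃ α, LIndLE L X α then Dim.ofOrdinal (sInf {α | LIndLE L X α}) else ⊤

/-- `L` is an absolute neighbourhood retract (for metric spaces): `L` is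
metrizable and whenever a closed subset `A` of a metric space is homeomorphic to
`L` via `e`, the map `e` extends continuously over a neighbourhood of `A`. -/
def IsANR (L : Type) [TopologicalSpace L] : Prop :=
  TopologicalSpace.MetrizableSpace L ∧
  ∀ (M : Type) [MetricSpace M], ∀ A : Set M, IsClosed A → ∀ e : A ≃ₜ L,
    ∃ U : Set M, IsOpen U ∧ ∃ hAU : A ⊆ U, ∃ r : C(U, L),
      ∀ (a : M) (ha : a ∈ A), r ⟨a, hAU ha⟩ = e ⟨a, ha⟩

/-- `L-Ind_{b+} X`: the least dimension value `d` such that some open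
neighbourhood of `b` has closure of `L-Ind` at most `d`. -/
def LIndPlus (L : Type) [TopologicalSpace L] {X : Type} [TopologicalSpace X] (b : X) : Dim :=
  sInf {d : Dim | ∃ U : Set X, IsOpen U ∧ b ∈ U ∧ LInd L (↥(closure U)) ≤ d}

/-- The set `K(X) = {b ∈ X : L-Ind_{b+} X = L-Ind X}`. -/
def LKset (L : Type) [TopologicalSpace L] (X : Type) [TopologicalSpace X] : Set X :=
  {b | LIndPlus L b = LInd L X}

/-- The weight of a topological space: the least cardinality of a basis. -/
def tWeight (X : Type) [TopologicalSpace X] : Cardinal :=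
  sInf {c | ∃ B : Set (Set X), TopologicalSpace.IsTopologicalBasis B ∧ #B = c}

/-- The family `𝒮_X` of all subsets of `X` that are finite or homeomorphic to the
one-point compactification `A_{ℵ₀}` of a countably infinite discrete space. -/
def SFam (X : Type) [TopologicalSpace X] : Set (Set X) :=
  {S | S.Finite ∨ Nonempty (↥S ≃ₜ OnePoint ℕ)}

/-- The relation generating the quotient `N` in the `Z(X,Y)` construction:
each set `{μ} × {x} × Y` is collapsed to a point. -/
def ZRel (ι X Y : Type) : (OnePoint ι × X × Y) → (OnePoint ι × X × Y) → Prop :=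
  fun p q => p.1 = OnePoint.infty ∧ q.1 = OnePoint.infty ∧ p.2.1 = q.2.1

/-- The quotient space `N` of `A_𝔪 × X × Y`. -/
abbrev ZQuot (ι X Y : Type) [TopologicalSpace ι] [TopologicalSpace X] [TopologicalSpace Y] :
    Type :=
  Quot (ZRel ι X Y)

/-- The subset `Z(X,Y) = ⋃_{α ∈ A_𝔪} H(α)` of `N`:  `H(μ) = π₁({μ} × X × Y)` and
`H(α) = π₁({α} × φ(α) × Y)` for `α ≠ μ`. -/
def ZSet (ι X Y : Type) [TopologicalSpace ι] [TopologicalSpace X] [TopologicalSpace Y]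
    (φ : ι → Set X) : Set (ZQuot ι X Y) :=
  {z | ∃ p : OnePoint ι × X × Y, Quot.mk (ZRel ι X Y) p = z ∧
        (p.1 = OnePoint.infty ∨ ∃ i : ι, p.1 = (i : OnePoint ι) ∧ p.2.1 ∈ φ i)}

/-- The space `Z(X,Y)` (for the data `ι`, `φ`), with the subspace topology. -/
abbrev ZSpace (ι X Y : Type) [TopologicalSpace ι] [TopologicalSpace X] [TopologicalSpace Y]
    (φ : ι → Set X) : Type :=
  ↥(ZSet ι X Y φ)

/-- The subset `H(μ)` of `Z(X,Y)`. -/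
def ZHmu (ι X Y : Type) [TopologicalSpace ι] [TopologicalSpace X] [TopologicalSpace Y]
    (φ : ι → Set X) : Set (ZSpace ι X Y φ) :=
  {z | ∃ (x : X) (y : Y), (z : ZQuot ι X Y) = Quot.mk (ZRel ι X Y) (OnePoint.infty, x, y)}

/-- The projection `π_X : N → X`, `π₁(α,x,y) ↦ x`. -/
def ZQuotProjX {ι X Y : Type} [TopologicalSpace ι] [TopologicalSpace X] [TopologicalSpace Y] :
    ZQuot ι X Y → X :=
  Quot.lift (fun p => p.2.1) (fun _ _ h => h.2.2)

/-- The projection `π_X : Z(X,Y) → X`. -/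
def ZProjX {ι X Y : Type} [TopologicalSpace ι] [TopologicalSpace X] [TopologicalSpace Y]
    (φ : ι → Set X) : ZSpace ι X Y φ → X :=
  fun z => ZQuotProjX (z : ZQuot ι X Y)

/-- The cardinality requirements on the index set `ι` (of cardinality `𝔪`) in the
`Z(X,Y)` construction: `𝔪 ≥ max {ℵ₀, (wX)⁺, (wY)⁺, card 𝒮_X}`. -/
def ZCardOK (X Y ι : Type) [TopologicalSpace X] [TopologicalSpace Y] : Prop :=
  ℵ₀ ≤ #ι ∧ tWeight X < #ι ∧ tWeight Y < #ι ∧ #(SFam X) ≤ #ι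

/-- The requirements on `φ : A_𝔪 \ {μ} → 𝒮_X`: it takes values in `𝒮_X` and every
fibre has cardinality `𝔪`. -/
def ZPhiOK {X ι : Type} [TopologicalSpace X] (φ : ι → Set X) : Prop :=
  (∀ i, φ i ∈ SFam X) ∧ ∀ S ∈ SFam X, #(↥(φ ⁻¹' {S})) = #ι



/-! ### Auxiliary development -/

section AuxDim

theorem Dim.ofOrdinal_le_ofOrdinal {a b : Ordinal.{0}} :
    Dim.ofOrdinal a ≤ Dim.ofOrdinal b ↔ a ≤ b := by
  simp [Dim.ofOrdinal]

theorem Dim.ofOrdinal_lt_ofOrdinal {a b : Ordinal.{0}} :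
    Dim.ofOrdinal a < Dim.ofOrdinal b ↔ a < b := by
  simp [Dim.ofOrdinal]

theorem Dim.ofOrdinal_inj {a b : Ordinal.{0}} :
    Dim.ofOrdinal a = Dim.ofOrdinal b ↔ a = b := by
  simp [Dim.ofOrdinal]

theorem Dim.minusOne_le (d : Dim) : Dim.minusOne ≤ d := by
  cases d with
  | none => exact le_top
  | some d => exact WithTop.coe_le_coe.2 bot_le

theorem Dim.minusOne_lt_ofOrdinal (a : Ordinal.{0}) : Dim.minusOne < Dim.ofOrdinal a := by
  exact WithTop.coe_lt_coe.2 (WithBot.bot_lt_coe a)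

theorem Dim.ofOrdinal_ne_top (a : Ordinal.{0}) : Dim.ofOrdinal a ≠ ⊤ := by
  simp [Dim.ofOrdinal]

theorem Dim.minusOne_ne_ofOrdinal (a : Ordinal.{0}) : Dim.minusOne ≠ Dim.ofOrdinal a := by
  simp [Dim.minusOne, Dim.ofOrdinal]

end AuxDim

section AuxK

variable {m : ℕ} {K : Finset (Fin m) → Prop}

theorem kIndLE_iff (X : Type) [tX : TopologicalSpace X] (α : Ordinal.{0}) :
    KIndLE K X α ↔
      ∀ F : Fin m → Set X, (∀ i, IsClosed (F i)) → IsKTuple K F →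
        ∃ U : Fin m → Set X, (∀ i, IsOpen (U i)) ∧ IsKTuple K U ∧ (∀ i, F i ⊆ U i) ∧
          ((⋃ i, U i)ᶜ = (∅ : Set X) ∨
            ∃ β, β < α ∧ KIndLE K (↥((⋃ i, U i)ᶜ)) β) := by
  show KIndLeAux K α X tX ↔ _
  unfold KIndLeAux
  rw [WellFounded.fix_eq]
  constructor
  · intro h F hF hT
    obtain ⟨U, h1, h2, h3, h4⟩ := h F hF hT
    refine ⟨U, h1, h2, h3, ?_⟩
    rcases h4 with h4 | ⟨β, hβ⟩
    · exact Or.inl h4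
    · exact Or.inr ⟨β.1, β.2, hβ⟩
  · intro h F hF hT
    obtain ⟨U, h1, h2, h3, h4⟩ := h F hF hT
    refine ⟨U, h1, h2, h3, ?_⟩
    rcases h4 with h4 | ⟨β, hβ, hh⟩
    · exact Or.inl h4
    · exact Or.inr ⟨⟨β, hβ⟩, hh⟩

theorem kIndLE_mono {X : Type} [TopologicalSpace X] {α α' : Ordinal.{0}} (h : α ≤ α')
    (hX : KIndLE K X α) : KIndLE K X α' := by
  rw [kIndLE_iff] at hX ⊢
  intro F hF hT
  obtain ⟨U, h1, h2, h3, h4⟩ := hX F hF hT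
  refine ⟨U, h1, h2, h3, ?_⟩
  rcases h4 with h4 | ⟨β, hβ, hh⟩
  · exact Or.inl h4
  · exact Or.inr ⟨β, lt_of_lt_of_le hβ h, hh⟩

theorem kIndLE_of_isEmpty (X : Type) [TopologicalSpace X] [IsEmpty X] (α : Ordinal.{0}) :
    KIndLE K X α := by
  rw [kIndLE_iff]
  intro F _ _
  refine ⟨fun _ => ∅, fun _ => isOpen_empty, ?_, fun i x hx => isEmptyElim x, Or.inl ?_⟩
  · intro I hI hne
    exfalso
    obtain ⟨x, -⟩ := hne
    exact isEmptyElim x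
  · exact Set.eq_empty_of_isEmpty _

end AuxK


section AuxHomeo

/-- The subtype of a subtype is homeomorphic to the image set. -/
def subtypeImageHomeo {Z : Type} [TopologicalSpace Z] (C : Set Z) (T : Set ↥C) :
    ↥T ≃ₜ ↥(Subtype.val '' T) where
  toEquiv := Equiv.Set.image Subtype.val T Subtype.val_injective
  continuous_toFun := by
    apply Continuous.subtype_mk
    exact continuous_subtype_val.comp continuous_subtype_val
  continuous_invFun := by
    have key : Continuous ((Equiv.Set.image Subtype.val T Subtype.val_injective).symm) := by
      rw [(IsEmbedding.subtypeVal.comp IsEmbedding.subtypeVal).continuous_iff]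
      have : (Subtype.val ∘ Subtype.val) ∘
          (Equiv.Set.image Subtype.val T Subtype.val_injective).symm = Subtype.val := by
        funext z
        exact congrArg Subtype.val
          ((Equiv.Set.image Subtype.val T Subtype.val_injective).apply_symm_apply z)
      rw [this]
      exact continuous_subtype_val
    exact key

@[simp] theorem subtypeImageHomeo_apply {Z : Type} [TopologicalSpace Z] (C : Set Z)
    (T : Set ↥C) (t : ↥T) : (subtypeImageHomeo C T t : Z) = ((t : ↥C) : Z) := rfl

theorem subtypeImageHomeo_symm_apply {Z : Type} [TopologicalSpace Z] (C : Set Z)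
    (T : Set ↥C) (t : ↥T) : (subtypeImageHomeo C T).symm ⟨((t : ↥C) : Z), ⟨t, t.2, rfl⟩⟩ = t := by
  apply (subtypeImageHomeo C T).injective
  simp
  rfl

end AuxHomeo

section AuxK2

variable {m : ℕ} {K : Finset (Fin m) → Prop}

theorem kIndLE_of_homeo (α : Ordinal.{0}) :
    ∀ {Z W : Type} [TopologicalSpace Z] [TopologicalSpace W],
      (Z ≃ₜ W) → KIndLE K W α → KIndLE K Z α := by
  induction α using Ordinal.induction with
  | _ α IH =>
    intro Z W _ _ e hW
    rw [kIndLE_iff] at hW ⊢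
    intro F hF hT
    have htup : IsKTuple K (fun i => e '' F i) := by
      intro I hI hne
      obtain ⟨w, hw⟩ := hne
      simp only [Set.mem_iInter] at hw
      refine hT I hI ⟨e.symm w, ?_⟩
      simp only [Set.mem_iInter]
      intro i hi
      obtain ⟨z, hz, rfl⟩ := hw i hi
      simpa using hz
    obtain ⟨U, hUo, hUt, hUs, hU⟩ := hW (fun i => e '' F i)
      (fun i => e.isClosedMap _ (hF i)) htup
    refine ⟨fun i => e ⁻¹' U i, fun i => (hUo i).preimage e.continuous, ?_, ?_, ?_⟩
    · intro I hI hne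
      obtain ⟨z, hz⟩ := hne
      simp only [Set.mem_iInter] at hz
      refine hUt I hI ⟨e z, ?_⟩
      simp only [Set.mem_iInter]
      exact fun i hi => hz i hi
    · intro i z hz
      exact hUs i ⟨z, hz, rfl⟩
    · have hset : (⋃ i, e ⁻¹' U i)ᶜ = e ⁻¹' ((⋃ i, U i)ᶜ) := by
        rw [Set.preimage_compl, Set.preimage_iUnion]
      rw [hset]
      rcases hU with hU | ⟨β, hβ, hK⟩
      · rw [hU]
        exact Or.inl (Set.preimage_empty)
      · refine Or.inr ⟨β, hβ, ?_⟩
        refine IH β hβ ?_ hK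
        exact (e.image _).trans
          (Homeomorph.setCongr (Set.image_preimage_eq _ e.surjective))

theorem kIndLE_closed (α : Ordinal.{0}) :
    ∀ {Z : Type} [TopologicalSpace Z] {C : Set Z},
      IsClosed C → KIndLE K Z α → KIndLE K (↥C) α := by
  induction α using Ordinal.induction with
  | _ α IH =>
    intro Z _ C hC hZ
    rw [kIndLE_iff] at hZ ⊢
    intro F hF hT
    have htup : IsKTuple K (fun i => Subtype.val '' F i) := by
      intro I hI hne
      obtain ⟨w, hw⟩ := hne
      simp only [Set.mem_iInter] at hw
      have hI2 := hI
      obtain ⟨i0, hi0⟩ := hI2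
      obtain ⟨z0, -, hz0⟩ := hw i0 hi0
      have hwC : w ∈ C := hz0 ▸ z0.2
      refine hT I hI ⟨⟨w, hwC⟩, ?_⟩
      simp only [Set.mem_iInter]
      intro i hi
      obtain ⟨z, hz, hze⟩ := hw i hi
      have : z = ⟨w, hwC⟩ := Subtype.ext hze
      exact this ▸ hz
    obtain ⟨U, hUo, hUt, hUs, hU⟩ := hZ (fun i => Subtype.val '' F i)
      (fun i => hC.isClosedEmbedding_subtypeVal.isClosedMap _ (hF i)) htup
    refine ⟨fun i => Subtype.val ⁻¹' U i,
      fun i => (hUo i).preimage continuous_subtype_val, ?_, ?_, ?_⟩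
    · intro I hI hne
      obtain ⟨z, hz⟩ := hne
      simp only [Set.mem_iInter] at hz
      refine hUt I hI ⟨(z : Z), ?_⟩
      simp only [Set.mem_iInter]
      exact fun i hi => hz i hi
    · intro i z hz
      exact hUs i ⟨z, hz, rfl⟩
    · have hset : (⋃ i, Subtype.val ⁻¹' U i)ᶜ =
          (Subtype.val : ↥C → Z) ⁻¹' ((⋃ i, U i)ᶜ) := by
        rw [Set.preimage_compl, Set.preimage_iUnion]
      rw [hset]
      rcases hU with hU | ⟨β, hβ, hKS⟩
      · rw [hU]
        exact Or.inl (Set.preimage_empty)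
      · set S := (⋃ i, U i)ᶜ with hSdef
        refine Or.inr ⟨β, hβ, ?_⟩
        have h1 : KIndLE K (↥((Subtype.val : ↥S → Z) ⁻¹' C)) β :=
          IH β hβ (hC.preimage continuous_subtype_val) hKS
        have h2 : Subtype.val '' ((Subtype.val : ↥C → Z) ⁻¹' S) =
            Subtype.val '' ((Subtype.val : ↥S → Z) ⁻¹' C) := by
          rw [Subtype.image_preimage_coe, Subtype.image_preimage_coe, Set.inter_comm]
        exact kIndLE_of_homeo β ((subtypeImageHomeo _ _).trans
          ((Homeomorph.setCongr h2).trans (subtypeImageHomeo _ _).symm)) h1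

end AuxK2


section AuxK3

variable {m : ℕ} {K : Finset (Fin m) → Prop}

/-- `K-Ind` over a finite partition into clopen pieces. -/
theorem kIndLE_clopenUnion (α : Ordinal.{0}) :
    ∀ {Z : Type} [TopologicalSpace Z] {ι : Type} [Fintype ι] (D : ι → Set Z),
      (∀ j, IsClopen (D j)) → (∀ j k, j ≠ k → Disjoint (D j) (D k)) →
      (⋃ j, D j) = Set.univ → (∀ j, KIndLE K (↥(D j)) α) → KIndLE K Z α := by
  induction α using Ordinal.induction with
  | _ α IH =>
    intro Z _ ι _ D hD hDd hDc hDK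
    rw [kIndLE_iff]
    intro F hF hT
    -- pull the tuple back to each piece
    have hpull : ∀ j, ∃ U' : Fin m → Set (↥(D j)),
        (∀ i, IsOpen (U' i)) ∧ IsKTuple K U' ∧
        (∀ i, (Subtype.val ⁻¹' F i) ⊆ U' i) ∧
        (((⋃ i, U' i)ᶜ : Set ↥(D j)) = ∅ ∨
          ∃ β, β < α ∧ KIndLE K (↥((⋃ i, U' i)ᶜ : Set ↥(D j))) β) := by
      intro j
      refine (kIndLE_iff _ α).1 (hDK j) (fun i => Subtype.val ⁻¹' F i)
        (fun i => (hF i).preimage continuous_subtype_val) ?_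
      intro I hI hne
      obtain ⟨z, hz⟩ := hne
      simp only [Set.mem_iInter] at hz
      refine hT I hI ⟨(z : Z), ?_⟩
      simp only [Set.mem_iInter]
      exact fun i hi => hz i hi
    choose U' hU'o hU't hU's hU'c using hpull
    -- the assembled neighbourhood
    set U : Fin m → Set Z := fun i => ⋃ j, Subtype.val '' (U' j i) with hUdef
    have hUD : ∀ j i, Subtype.val '' (U' j i) ⊆ D j := by
      intro j i z hz
      obtain ⟨w, -, rfl⟩ := hz
      exact w.2
    have hjeq : ∀ {j k : ι} {z : Z}, z ∈ D j → z ∈ D k → j = k := by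
      intro j k z hj hk
      by_contra hne
      exact Set.disjoint_left.1 (hDd j k hne) hj hk
    have hmemD : ∀ z : Z, ∃ j, z ∈ D j := by
      intro z
      have : z ∈ ⋃ j, D j := hDc ▸ Set.mem_univ z
      simpa using this
    refine ⟨U, ?_, ?_, ?_, ?_⟩
    · intro i
      exact isOpen_iUnion fun j =>
        ((hD j).2.isOpenEmbedding_subtypeVal).isOpenMap _ (hU'o j i)
    · -- K-tuple
      intro I hI hne
      obtain ⟨z, hz⟩ := hne
      simp only [Set.mem_iInter] at hz
      have hI2 := hI
      obtain ⟨i0, hi0⟩ := hI2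
      obtain ⟨j0, hj0⟩ := Set.mem_iUnion.1 (hz i0 hi0)
      have hzD : z ∈ D j0 := hUD j0 i0 hj0
      obtain ⟨w0, -, hw0⟩ := hj0
      refine hU't j0 I hI ⟨⟨z, hzD⟩, ?_⟩
      simp only [Set.mem_iInter]
      intro i hi
      obtain ⟨j', hj'⟩ := Set.mem_iUnion.1 (hz i hi)
      have : j' = j0 := hjeq (hUD j' i hj') hzD
      subst this
      obtain ⟨w, hw, hwe⟩ := hj'
      have : w = ⟨z, hzD⟩ := Subtype.ext hwe
      exact this ▸ hw
    · intro i z hz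
      obtain ⟨j, hj⟩ := hmemD z
      exact Set.mem_iUnion.2 ⟨j, ⟨⟨z, hj⟩, hU's j i hz, rfl⟩⟩
    · -- the complement
      set S : Set Z := (⋃ i, U i)ᶜ with hSdef
      have hSj : ∀ j, S ∩ D j = Subtype.val '' ((⋃ i, U' j i)ᶜ : Set ↥(D j)) := by
        intro j
        ext z
        constructor
        · rintro ⟨hzS, hzD⟩
          refine ⟨⟨z, hzD⟩, ?_, rfl⟩
          intro hmem
          obtain ⟨i, hi⟩ := Set.mem_iUnion.1 hmem
          exact hzS (Set.mem_iUnion.2 ⟨i, Set.mem_iUnion.2 ⟨j, ⟨⟨z, hzD⟩, hi, rfl⟩⟩⟩)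
        · rintro ⟨w, hw, rfl⟩
          refine ⟨?_, w.2⟩
          intro hmem
          obtain ⟨i, hi⟩ := Set.mem_iUnion.1 hmem
          obtain ⟨j', hj'⟩ := Set.mem_iUnion.1 hi
          have hDj' : (w : Z) ∈ D j' := hUD j' i hj'
          have : j' = j := hjeq hDj' w.2
          subst this
          obtain ⟨w', hw', hwe⟩ := hj'
          have : w' = w := Subtype.ext hwe
          exact hw (Set.mem_iUnion.2 ⟨i, this ▸ hw'⟩)
      by_cases hS : S = ∅
      · exact Or.inl hS
      · -- find a suitable bound β
        have hSne : S.Nonempty := Set.nonempty_iff_ne_empty.2 hS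
        obtain ⟨z0, hz0⟩ := hSne
        obtain ⟨j0, hj0⟩ := hmemD z0
        have hne0 : ((⋃ i, U' j0 i)ᶜ : Set ↥(D j0)) ≠ ∅ := by
          intro hcon
          have : z0 ∈ S ∩ D j0 := ⟨hz0, hj0⟩
          rw [hSj j0, hcon] at this
          simpa using this
        have hα : 0 < α := by
          rcases hU'c j0 with hc | ⟨β, hβ, -⟩
          · exact absurd hc hne0
          · exact lt_of_le_of_lt (zero_le : 0 ≤ β) hβ
        have hBj : ∀ j, ∃ β, β < α ∧ KIndLE K (↥((⋃ i, U' j i)ᶜ : Set ↥(D j))) β := by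
          intro j
          rcases hU'c j with hc | h
          · refine ⟨0, hα, ?_⟩
            haveI : IsEmpty (↥((⋃ i, U' j i)ᶜ : Set ↥(D j))) :=
              Set.isEmpty_coe_sort.2 hc
            exact kIndLE_of_isEmpty _ _
          · exact h
        choose b hb hbK using hBj
        set β : Ordinal.{0} := Finset.univ.sup b with hβdef
        have hβα : β < α := by
          refine Finset.sup_lt_iff ?_ |>.2 fun j _ => hb j
          rw [Ordinal.bot_eq_zero]
          exact hα
        refine Or.inr ⟨β, hβα, ?_⟩
        -- decompose the complement into clopen pieces
        refine IH β hβα (fun j => (Subtype.val : ↥S → Z) ⁻¹' D j)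
          (fun j => (hD j).preimage continuous_subtype_val) ?_ ?_ ?_
        · intro j k hjk
          rw [Set.disjoint_left]
          intro z hj hk
          exact hjk (hjeq hj hk)
        · ext z
          simp only [Set.mem_iUnion, Set.mem_univ, iff_true]
          exact hmemD (z : Z)
        · intro j
          have h2 : Subtype.val '' ((Subtype.val : ↥S → Z) ⁻¹' D j) =
              Subtype.val '' ((⋃ i, U' j i)ᶜ : Set ↥(D j)) := by
            rw [Subtype.image_preimage_coe, ← hSj j]
          refine kIndLE_of_homeo β ((subtypeImageHomeo _ _).trans
            ((Homeomorph.setCongr h2).trans (subtypeImageHomeo _ _).symm)) ?_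
          exact kIndLE_mono (Finset.le_sup (Finset.mem_univ j)) (hbK j)

end AuxK3

section AuxZeroDim

/-- From covering dimension zero: finite open covers refine to disjoint clopen covers. -/
theorem covDimLE_zero_disjoint {X : Type} [TopologicalSpace X] (h : CovDimLE X 0)
    {ι : Type} [Fintype ι] (U : ι → Set X) (hUo : ∀ i, IsOpen (U i))
    (hUc : (⋃ i, U i) = Set.univ) :
    ∃ V : ι → Set X, (∀ i, IsClopen (V i)) ∧ (∀ i, V i ⊆ U i) ∧ (⋃ i, V i) = Set.univ ∧
      ∀ i j, i ≠ j → Disjoint (V i) (V j) := by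
  obtain ⟨V, hVo, hVs, hVc, hVn⟩ := h ι inferInstance U hUo hUc
  have hdisj : ∀ i j, i ≠ j → Disjoint (V i) (V j) := by
    intro i j hij
    rw [Set.disjoint_left]
    intro x hxi hxj
    have hsub : ({i, j} : Set ι) ⊆ {k | x ∈ V k} := by
      rintro k (rfl | rfl)
      · exact hxi
      · simpa using hxj
    have h2 : ({i, j} : Set ι).ncard = 2 := Set.ncard_pair hij
    have h2' := Set.ncard_le_ncard hsub (Set.toFinite _)
    have h3 := hVn x
    omega
  have hclosed : ∀ i, IsClosed (V i) := by
    intro i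
    have : (V i)ᶜ = ⋃ j, ⋃ (_ : j ≠ i), V j := by
      ext x
      simp only [Set.mem_compl_iff, Set.mem_iUnion]
      constructor
      · intro hx
        have : x ∈ ⋃ j, V j := hVc ▸ Set.mem_univ x
        obtain ⟨j, hj⟩ := Set.mem_iUnion.1 this
        refine ⟨j, ?_, hj⟩
        rintro rfl
        exact hx hj
      · rintro ⟨j, hji, hj⟩ hx
        exact Set.disjoint_left.1 (hdisj j i hji) hj hx
    rw [← isOpen_compl_iff, this]
    exact isOpen_iUnion fun j => isOpen_iUnion fun _ => hVo j
  exact ⟨V, fun i => ⟨hclosed i, hVo i⟩, hVs, hVc, hdisj⟩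

/-- Covering dimension zero passes to clopen subspaces. -/
theorem covDimLE_zero_subtype {X : Type} [TopologicalSpace X] (h : CovDimLE X 0)
    {C : Set X} (hC : IsClopen C) : CovDimLE (↥C) 0 := by
  intro ι hι U hUo hUc
  haveI := hι
  have hO : ∀ i, ∃ O : Set X, IsOpen O ∧ Subtype.val ⁻¹' O = U i := fun i =>
    isOpen_induced_iff.1 (hUo i)
  choose O hOo hOU using hO
  set W : ι ⊕ Unit → Set X := fun k => Sum.elim (fun i => O i ∩ C) (fun _ => Cᶜ) k with hWdef
  have hWo : ∀ k, IsOpen (W k) := by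
    rintro (i | u)
    · exact (hOo i).inter hC.2
    · exact hC.1.isOpen_compl
  have hWc : (⋃ k, W k) = Set.univ := by
    ext x
    simp only [Set.mem_iUnion, Set.mem_univ, iff_true]
    by_cases hx : x ∈ C
    · have : (⟨x, hx⟩ : ↥C) ∈ ⋃ i, U i := hUc ▸ Set.mem_univ _
      obtain ⟨i, hi⟩ := Set.mem_iUnion.1 this
      refine ⟨Sum.inl i, ?_, hx⟩
      rw [← hOU i] at hi
      exact hi
    · exact ⟨Sum.inr (), hx⟩
  obtain ⟨V', hV'o, hV's, hV'c, hV'n⟩ := h (ι ⊕ Unit) inferInstance W hWo hWc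
  refine ⟨fun i => Subtype.val ⁻¹' V' (Sum.inl i),
    fun i => (hV'o _).preimage continuous_subtype_val, ?_, ?_, ?_⟩
  · intro i z hz
    have : (z : X) ∈ O i ∩ C := hV's (Sum.inl i) hz
    rw [← hOU i]
    exact this.1
  · ext z
    simp only [Set.mem_iUnion, Set.mem_univ, iff_true]
    have : (z : X) ∈ ⋃ k, V' k := hV'c ▸ Set.mem_univ _
    obtain ⟨k, hk⟩ := Set.mem_iUnion.1 this
    rcases k with i | u
    · exact ⟨i, hk⟩
    · exfalso
      have hzc : (z : X) ∈ Cᶜ := hV's (Sum.inr u) hk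
      exact hzc z.2
  · intro z
    have hinj : Set.InjOn (Sum.inl : ι → ι ⊕ Unit) {i : ι | z ∈ Subtype.val ⁻¹' V' (Sum.inl i)} := by
      intro a _ b _ hab
      simpa using hab
    calc {i : ι | z ∈ Subtype.val ⁻¹' V' (Sum.inl i)}.ncard
        = ((Sum.inl : ι → ι ⊕ Unit) '' {i : ι | z ∈ Subtype.val ⁻¹' V' (Sum.inl i)}).ncard :=
          (Set.ncard_image_of_injOn hinj).symm
      _ ≤ {k : ι ⊕ Unit | (z : X) ∈ V' k}.ncard := by
          refine Set.ncard_le_ncard ?_ (Set.toFinite _)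
          rintro k ⟨i, hi, rfl⟩
          exact hi
      _ ≤ 0 + 1 := hV'n (z : X)

/-- The tube lemma for a closed set in a product of compact spaces. -/
theorem isOpen_tubeSet {X Y : Type} [TopologicalSpace X] [TopologicalSpace Y]
    [CompactSpace X] [CompactSpace Y] [T2Space X]
    {F : Set (X × Y)} (hF : IsClosed F) {W : Set Y} (hW : IsOpen W) :
    IsOpen {x' : X | ∀ y : Y, (x', y) ∈ F → y ∈ W} := by
  rw [← isClosed_compl_iff]
  have : {x' : X | ∀ y : Y, (x', y) ∈ F → y ∈ W}ᶜ =
      Prod.fst '' (F ∩ (Set.univ ×ˢ Wᶜ)) := by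
    ext x'
    simp only [Set.mem_compl_iff, Set.mem_setOf_eq, not_forall]
    constructor
    · rintro ⟨y, hyF, hyW⟩
      exact ⟨(x', y), ⟨hyF, Set.mem_univ _, hyW⟩, rfl⟩
    · rintro ⟨⟨a, b⟩, ⟨hab, -, hbW⟩, rfl⟩
      exact ⟨b, hab, hbW⟩
  rw [this]
  have hcomp : IsCompact (F ∩ (Set.univ ×ˢ Wᶜ)) :=
    (hF.isCompact).inter_right (isClosed_univ.prod hW.isClosed_compl)
  exact (hcomp.image continuous_fst).isClosed

end AuxZeroDim


section AuxKProd

variable {m : ℕ} {K : Finset (Fin m) → Prop}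

/-- The key product lemma: if `X` is compact of covering dimension zero then
`K-Ind (X × Y) ≤ K-Ind Y`. -/
theorem kIndLE_prod (α : Ordinal.{0}) :
    ∀ (X Y : Type) [TopologicalSpace X] [TopologicalSpace Y]
      [CompactSpace X] [CompactSpace Y] [T2Space X] [T2Space Y],
      CovDimLE X 0 → KIndLE K Y α → KIndLE K (X × Y) α := by
  induction α using Ordinal.induction with
  | _ α IH =>
    intro X Y _ _ _ _ _ _ hX hY
    rcases isEmpty_or_nonempty (X × Y) with hE | hNE
    · exact kIndLE_of_isEmpty _ _
    rw [kIndLE_iff]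
    intro F hF hT
    have hslice : ∀ x : X, ∃ V : Fin m → Set Y,
        (∀ i, IsOpen (V i)) ∧ IsKTuple K V ∧ (∀ i, {y | (x, y) ∈ F i} ⊆ V i) ∧
        (((⋃ i, V i)ᶜ : Set Y) = ∅ ∨
          ∃ β, β < α ∧ KIndLE K (↥((⋃ i, V i)ᶜ : Set Y)) β) := by
      intro x
      refine (kIndLE_iff Y α).1 hY (fun i => {y | (x, y) ∈ F i})
        (fun i => (hF i).preimage (continuous_const.prodMk continuous_id)) ?_
      intro I hI hne
      obtain ⟨y, hy⟩ := hne
      simp only [Set.mem_iInter, Set.mem_setOf_eq] at hy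
      refine hT I hI ⟨(x, y), ?_⟩
      simp only [Set.mem_iInter]
      exact fun i hi => hy i hi
    choose V hVo hVt hVs hVc using hslice
    set O : X → Set X := fun x => ⋂ i, {x' : X | ∀ y : Y, (x', y) ∈ F i → y ∈ V x i}
      with hOdef
    have hOo : ∀ x, IsOpen (O x) := fun x =>
      isOpen_iInter_of_finite fun i => isOpen_tubeSet (hF i) (hVo x i)
    have hOx : ∀ x, x ∈ O x := fun x =>
      Set.mem_iInter.2 fun i y hy => hVs x i hy
    obtain ⟨t, ht⟩ := isCompact_univ.elim_finite_subcover O hOo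
      (fun x _ => Set.mem_iUnion.2 ⟨x, hOx x⟩)
    have hcov : (⋃ j : ↥t, O ↑j) = Set.univ := by
      apply Set.eq_univ_of_univ_subset
      intro x hx
      have := ht (Set.mem_univ x)
      simp only [Set.mem_iUnion] at this
      obtain ⟨a, ha, haO⟩ := this
      exact Set.mem_iUnion.2 ⟨⟨a, ha⟩, haO⟩
    obtain ⟨C, hCclop, hCsub, hCcov, hCdisj⟩ :=
      covDimLE_zero_disjoint hX (fun j : ↥t => O ↑j) (fun j => hOo ↑j) hcov
    have hmemC : ∀ x : X, ∃ j, x ∈ C j := by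
      intro x
      have : x ∈ ⋃ j, C j := hCcov ▸ Set.mem_univ x
      simpa using this
    have hjeq : ∀ {j k : ↥t} {x : X}, x ∈ C j → x ∈ C k → j = k := by
      intro j k x hj hk
      by_contra hne
      exact Set.disjoint_left.1 (hCdisj j k hne) hj hk
    set U : Fin m → Set (X × Y) := fun i => ⋃ j : ↥t, (C j) ×ˢ (V ↑j i) with hUdef
    refine ⟨U, ?_, ?_, ?_, ?_⟩
    · exact fun i => isOpen_iUnion fun j => ((hCclop j).2).prod (hVo _ i)
    · intro I hI hne
      obtain ⟨z, hz⟩ := hne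
      simp only [Set.mem_iInter] at hz
      have hI2 := hI
      obtain ⟨i0, hi0⟩ := hI2
      obtain ⟨j0, hj0⟩ := Set.mem_iUnion.1 (hz i0 hi0)
      have hx0 : z.1 ∈ C j0 := hj0.1
      refine hVt ↑j0 I hI ⟨z.2, ?_⟩
      simp only [Set.mem_iInter]
      intro i hi
      obtain ⟨j', hj'⟩ := Set.mem_iUnion.1 (hz i hi)
      have : j' = j0 := hjeq hj'.1 hx0
      exact this ▸ hj'.2
    · intro i z hz
      obtain ⟨j, hj⟩ := hmemC z.1
      have hzV : z.2 ∈ V ↑j i := by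
        have hO1 := hCsub j hj
        exact Set.mem_iInter.1 hO1 i z.2 hz
      exact Set.mem_iUnion.2 ⟨j, ⟨hj, hzV⟩⟩
    · set S : Set (X × Y) := (⋃ i, U i)ᶜ with hSdef
      have hSj : ∀ j : ↥t, S ∩ ((C j) ×ˢ (Set.univ : Set Y)) =
          (C j) ×ˢ ((⋃ i, V ↑j i)ᶜ) := by
        intro j
        ext z
        constructor
        · rintro ⟨hzS, hzC, -⟩
          refine ⟨hzC, ?_⟩
          intro hmem
          obtain ⟨i, hi⟩ := Set.mem_iUnion.1 hmem
          exact hzS (Set.mem_iUnion.2 ⟨i, Set.mem_iUnion.2 ⟨j, ⟨hzC, hi⟩⟩⟩)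
        · rintro ⟨hzC, hzP⟩
          refine ⟨?_, hzC, Set.mem_univ _⟩
          intro hmem
          obtain ⟨i, hi⟩ := Set.mem_iUnion.1 hmem
          obtain ⟨j', hj'⟩ := Set.mem_iUnion.1 hi
          have : j' = j := hjeq hj'.1 hzC
          subst this
          exact hzP (Set.mem_iUnion.2 ⟨i, hj'.2⟩)
      by_cases hS : S = ∅
      · exact Or.inl hS
      obtain ⟨z0, hz0⟩ := Set.nonempty_iff_ne_empty.2 hS
      obtain ⟨j0, hj0⟩ := hmemC z0.1
      have hne0 : ((⋃ i, V ↑j0 i)ᶜ : Set Y) ≠ ∅ := by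
        intro hcon
        have hmem : z0 ∈ S ∩ ((C j0) ×ˢ (Set.univ : Set Y)) := ⟨hz0, hj0, Set.mem_univ _⟩
        rw [hSj j0] at hmem
        have := hmem.2
        rw [hcon] at this
        exact this
      have hα : 0 < α := by
        rcases hVc ↑j0 with hc | ⟨β, hβ, -⟩
        · exact absurd hc hne0
        · exact lt_of_le_of_lt (zero_le : 0 ≤ β) hβ
      have hBj : ∀ j : ↥t, ∃ β, β < α ∧ KIndLE K (↥((⋃ i, V ↑j i)ᶜ : Set Y)) β := by
        intro j
        rcases hVc ↑j with hc | hgood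
        · refine ⟨0, hα, ?_⟩
          haveI : IsEmpty (↥((⋃ i, V (↑j) i)ᶜ : Set Y)) := Set.isEmpty_coe_sort.2 hc
          exact kIndLE_of_isEmpty _ _
        · exact hgood
      choose b hb hbK using hBj
      set β : Ordinal.{0} := Finset.univ.sup b with hβdef
      have hβα : β < α := by
        refine Finset.sup_lt_iff ?_ |>.2 fun j _ => hb j
        rw [Ordinal.bot_eq_zero]
        exact hα
      refine Or.inr ⟨β, hβα, ?_⟩
      refine kIndLE_clopenUnion β
        (fun j : ↥t => (Subtype.val : ↥S → X × Y) ⁻¹' ((C j) ×ˢ (Set.univ : Set Y)))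
        (fun j => ((hCclop j).prod isClopen_univ).preimage continuous_subtype_val)
        ?_ ?_ ?_
      · intro j k hjk
        rw [Set.disjoint_left]
        rintro z ⟨hj, -⟩ ⟨hk, -⟩
        exact hjk (hjeq hj hk)
      · ext z
        simp only [Set.mem_iUnion, Set.mem_univ, iff_true]
        obtain ⟨j, hj⟩ := hmemC (z : X × Y).1
        exact ⟨j, hj, Set.mem_univ _⟩
      · intro j
        have h2 : Subtype.val '' ((Subtype.val : ↥S → X × Y) ⁻¹' ((C j) ×ˢ (Set.univ : Set Y)))
            = (C j) ×ˢ ((⋃ i, V ↑j i)ᶜ) := by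
          rw [Subtype.image_preimage_coe, hSj j]
        have h3 : KIndLE K ((↥(C j)) × (↥((⋃ i, V ↑j i)ᶜ : Set Y))) β := by
          haveI : CompactSpace ↥(C j) := isCompact_iff_compactSpace.1 ((hCclop j).1.isCompact)
          haveI : CompactSpace (↥((⋃ i, V ↑j i)ᶜ : Set Y)) :=
            isCompact_iff_compactSpace.1
              ((isOpen_iUnion fun i => hVo _ i).isClosed_compl.isCompact)
          exact IH β hβα _ _ (covDimLE_zero_subtype hX (hCclop j))
            (kIndLE_mono (Finset.le_sup (Finset.mem_univ j)) (hbK j))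
        exact kIndLE_of_homeo β ((subtypeImageHomeo _ _).trans
          ((Homeomorph.setCongr h2).trans (Homeomorph.Set.prod _ _))) h3

end AuxKProd


section AuxKInd

variable {m : ℕ} {K : Finset (Fin m) → Prop}

theorem ordinalSet_bddBelow (s : Set Ordinal.{0}) : BddBelow s :=
  ⟨0, fun x _ => (zero_le : 0 ≤ x)⟩

theorem kIndLE_le_iff {Z : Type} [TopologicalSpace Z] {α : Ordinal.{0}} :
    KIndLE K Z α ↔ KInd K Z ≤ Dim.ofOrdinal α := by
  constructor
  · intro h
    unfold KInd
    by_cases hE : IsEmpty Z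
    · simp only [hE, if_true]
      exact le_of_lt (Dim.minusOne_lt_ofOrdinal α)
    · have hex : ∃ γ, KIndLE K Z γ := ⟨α, h⟩
      simp only [hE, if_false, hex, if_true]
      rw [Dim.ofOrdinal_le_ofOrdinal]
      exact csInf_le (ordinalSet_bddBelow _) h
  · intro h
    by_cases hE : IsEmpty Z
    · exact kIndLE_of_isEmpty _ _
    · unfold KInd at h
      simp only [hE, if_false] at h
      by_cases hex : ∃ γ, KIndLE K Z γ
      · simp only [hex, if_true] at h
        rw [Dim.ofOrdinal_le_ofOrdinal] at h
        have hmem : sInf {γ | KIndLE K Z γ} ∈ {γ | KIndLE K Z γ} := csInf_mem hex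
        exact kIndLE_mono h hmem
      · simp only [hex, if_false] at h
        exact absurd h (by simp [Dim.ofOrdinal])
  
theorem kInd_congr {Z W : Type} [TopologicalSpace Z] [TopologicalSpace W]
    (he : IsEmpty Z ↔ IsEmpty W) (hs : ∀ α, KIndLE K Z α ↔ KIndLE K W α) :
    KInd K Z = KInd K W := by
  unfold KInd
  by_cases hE : IsEmpty Z
  · simp only [hE, he.1 hE, if_true]
  · have hE' : ¬ IsEmpty W := fun hw => hE (he.2 hw)
    simp only [hE, hE', if_false]
    have hsets : {α | KIndLE K Z α} = {α | KIndLE K W α} := Set.ext hs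
    by_cases hex : ∃ α, KIndLE K Z α
    · have hex' : ∃ α, KIndLE K W α := by
        obtain ⟨α, hα⟩ := hex
        exact ⟨α, (hs α).1 hα⟩
      simp only [hex, hex', if_true, hsets]
    · have hex' : ¬ ∃ α, KIndLE K W α := by
        intro ⟨α, hα⟩
        exact hex ⟨α, (hs α).2 hα⟩
      simp only [hex, hex', if_false]

theorem kInd_of_homeo {Z W : Type} [TopologicalSpace Z] [TopologicalSpace W] (e : Z ≃ₜ W) :
    KInd K Z = KInd K W := by
  refine kInd_congr ⟨fun h => ⟨fun w => h.elim (e.symm w)⟩, fun h => ⟨fun z => h.elim (e z)⟩⟩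
    fun α => ⟨fun h => kIndLE_of_homeo α e.symm h, fun h => kIndLE_of_homeo α e h⟩

theorem kInd_le_of_closed {Z : Type} [TopologicalSpace Z] {C : Set Z} (hC : IsClosed C) :
    KInd K (↥C) ≤ KInd K Z := by
  by_cases hE : IsEmpty (↥C)
  · unfold KInd
    simp only [hE, if_true]
    exact Dim.minusOne_le _
  · rcases le_or_gt (KInd K Z) (KInd K (↥C)) with h | h
    · rcases lt_or_eq_of_le h with h' | h'
      · exfalso
        -- KInd Z < KInd ↥C: derive a contradiction
        -- KInd Z must be an ordinal value or minusOne (not ⊤)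
        unfold KInd at h'
        have hE' : ¬ IsEmpty Z := by
          intro hz
          exact hE ⟨fun c => hz.elim (c : Z)⟩
        simp only [hE, hE', if_false] at h'
        by_cases hex : ∃ α, KIndLE K Z α
        · simp only [hex, if_true] at h'
          -- then KIndLE Z (sInf ...), so KIndLE ↥C (sInf ...), so KInd ↥C ≤ that
          have hmem : sInf {γ | KIndLE K Z γ} ∈ {γ | KIndLE K Z γ} := csInf_mem hex
          have hle : KIndLE K (↥C) (sInf {γ | KIndLE K Z γ}) := kIndLE_closed _ hC hmem
          rw [kIndLE_le_iff] at hle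
          have hC' : ¬ IsEmpty (↥C) := hE
          unfold KInd at hle
          simp only [hE, hE', if_false] at hle h'
          exact absurd (lt_of_le_of_lt hle h') (lt_irrefl _)
        · simp only [hex, if_false] at h'
          exact absurd h' (not_lt_of_ge le_top)
      · exact le_of_eq h'.symm
    · exact le_of_lt h

/-- A homeomorphism between `Y` and the slice `{x0} × Y`. -/
def sliceHomeo (X Y : Type) [TopologicalSpace X] [TopologicalSpace Y] (x0 : X) :
    Y ≃ₜ ↥((({x0} : Set X)) ×ˢ (Set.univ : Set Y)) where
  toFun y := ⟨(x0, y), rfl, Set.mem_univ _⟩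
  invFun z := (z : X × Y).2
  left_inv y := rfl
  right_inv z := by
    apply Subtype.ext
    have h1 : (z : X × Y).1 = x0 := z.2.1
    exact Prod.ext h1.symm rfl
  continuous_toFun := Continuous.subtype_mk (continuous_const.prodMk continuous_id) _
  continuous_invFun := continuous_snd.comp continuous_subtype_val

/-- Part (a): `K-Ind (X × Y) = K-Ind Y`. -/
theorem kInd_prod_eq (X Y : Type) [TopologicalSpace X] [TopologicalSpace Y]
    [CompactSpace X] [CompactSpace Y] [T2Space X] [T2Space Y]
    (hX : CovDimLE X 0) (hXne : Nonempty X) : KInd K (X × Y) = KInd K Y := by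
  obtain ⟨x0⟩ := hXne
  refine kInd_congr ?_ ?_
  · constructor
    · intro h
      exact ⟨fun y => h.elim (x0, y)⟩
    · intro h
      exact ⟨fun z => h.elim z.2⟩
  · intro α
    constructor
    · intro h
      have hcl : IsClosed ((({x0} : Set X)) ×ˢ (Set.univ : Set Y)) :=
        isClosed_singleton.prod isClosed_univ
      exact kIndLE_of_homeo α (sliceHomeo X Y x0) (kIndLE_closed α hcl h)
    · intro h
      exact kIndLE_prod α X Y hX h

/-- Extracting the content of `covDim X = 0`. -/
theorem covDim_zero_iff {X : Type} [TopologicalSpace X]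
    (h : covDim X = Dim.ofOrdinal 0) : Nonempty X ∧ CovDimLE X 0 := by
  unfold covDim at h
  by_cases hE : IsEmpty X
  · simp only [hE, if_true] at h
    exact absurd h (Dim.minusOne_ne_ofOrdinal 0)
  · refine ⟨not_isEmpty_iff.1 hE, ?_⟩
    by_cases hex : ∃ n, CovDimLE X n
    · simp only [hE, hex, if_true, if_false] at h
      rw [Dim.ofOrdinal_inj] at h
      have : sInf {n | CovDimLE X n} = 0 := by
        exact_mod_cast h
      rcases Nat.sInf_eq_zero.1 this with h0 | hempty
      · exact h0
      · exfalso
        obtain ⟨n, hn⟩ := hex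
        exact absurd hempty (Set.nonempty_iff_ne_empty.1 ⟨n, hn⟩)
    · simp only [hE, hex, if_false] at h
      exact absurd h.symm (Dim.ofOrdinal_ne_top 0)

end AuxKInd


section AuxKStr

variable {m : ℕ} {K : Finset (Fin m) → Prop}

theorem kIndLE_of_kInd_lt {Z : Type} [TopologicalSpace Z] {α : Ordinal.{0}} (hα : 0 < α)
    (h : KInd K Z < Dim.ofOrdinal α) : ∃ β, β < α ∧ KIndLE K Z β := by
  by_cases hE : IsEmpty Z
  · exact ⟨0, hα, kIndLE_of_isEmpty _ _⟩
  · unfold KInd at h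
    simp only [hE, if_false] at h
    by_cases hex : ∃ γ, KIndLE K Z γ
    · simp only [hex, if_true] at h
      rw [Dim.ofOrdinal_lt_ofOrdinal] at h
      exact ⟨_, h, csInf_mem hex⟩
    · simp only [hex, if_false] at h
      exact absurd h (not_lt_of_ge le_top)

theorem kInd_le_of_subset_closed {Z : Type} [TopologicalSpace Z] {A B : Set Z}
    (hA : IsClosed A) (hsub : A ⊆ B) : KInd K (↥A) ≤ KInd K (↥B) := by
  have h2 : Subtype.val '' ((Subtype.val : ↥B → Z) ⁻¹' A) = A := by
    rw [Subtype.image_preimage_coe]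
    exact Set.inter_eq_self_of_subset_right hsub
  have h3 : KInd K (↥A) = KInd K (↥((Subtype.val : ↥B → Z) ⁻¹' A)) :=
    (kInd_of_homeo ((subtypeImageHomeo _ _).trans (Homeomorph.setCongr h2))).symm
  rw [h3]
  exact kInd_le_of_closed (hA.preimage continuous_subtype_val)

/-- The general slice homeomorphism. -/
def sliceHomeo' (X : Type) {Y : Type} [TopologicalSpace X] [TopologicalSpace Y] (x0 : X)
    (P : Set Y) : ↥P ≃ₜ ↥((({x0} : Set X)) ×ˢ P) where
  toFun p := ⟨(x0, ↑p), rfl, p.2⟩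
  invFun z := ⟨(z : X × Y).2, z.2.2⟩
  left_inv p := rfl
  right_inv z := by
    apply Subtype.ext
    have h1 : (z : X × Y).1 = x0 := z.2.1
    exact Prod.ext h1.symm rfl
  continuous_toFun := Continuous.subtype_mk
    (continuous_const.prodMk continuous_subtype_val) _
  continuous_invFun := Continuous.subtype_mk
    (continuous_snd.comp continuous_subtype_val) _

/-- Strongness transfers from `Y` to `X × Y`. -/
theorem kStrongly_prod_of (X Y : Type) [TopologicalSpace X] [TopologicalSpace Y]
    [CompactSpace X] [CompactSpace Y] [T2Space X] [T2Space Y]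
    (hX : CovDimLE X 0) (hXne : Nonempty X) (hY : KStrongly K Y) :
    KStrongly K (X × Y) := by
  obtain ⟨⟨α, hα0, hαY⟩, F, hFc, hFt, hFbad⟩ := hY
  obtain ⟨x0⟩ := hXne
  have heq : KInd K (X × Y) = KInd K Y := kInd_prod_eq X Y hX ⟨x0⟩
  refine ⟨⟨α, hα0, heq.trans hαY⟩, fun i => (Set.univ : Set X) ×ˢ F i,
    fun i => isClosed_univ.prod (hFc i), ?_, ?_⟩
  · intro I hI hne
    obtain ⟨z, hz⟩ := hne
    simp only [Set.mem_iInter] at hz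
    refine hFt I hI ⟨z.2, ?_⟩
    simp only [Set.mem_iInter]
    exact fun i hi => (hz i hi).2
  · intro U hU hlt
    set V : Fin m → Set Y := fun i => {y | (x0, y) ∈ U i} with hVdef
    have hVnb : KNbhd K F V := by
      refine ⟨fun i => (hU.1 i).preimage (continuous_const.prodMk continuous_id), ?_, ?_⟩
      · intro I hI hne
        obtain ⟨y, hy⟩ := hne
        simp only [Set.mem_iInter, Set.mem_setOf_eq] at hy
        refine hU.2.1 I hI ⟨(x0, y), ?_⟩
        simp only [Set.mem_iInter]
        exact fun i hi => hy i hi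
      · intro i y hy
        exact hU.2.2 i ⟨Set.mem_univ _, hy⟩
    have hVlt : KInd K (↥((⋃ i, V i)ᶜ : Set Y)) < KInd K Y := by
      have hsub : (({x0} : Set X)) ×ˢ ((⋃ i, V i)ᶜ) ⊆ (⋃ i, U i)ᶜ := by
        rintro ⟨a, b⟩ ⟨ha, hb⟩ hmem
        obtain ⟨i, hi⟩ := Set.mem_iUnion.1 hmem
        have ha' : a = x0 := ha
        subst ha'
        exact hb (Set.mem_iUnion.2 ⟨i, hi⟩)
      have h1 : KInd K (↥((⋃ i, V i)ᶜ : Set Y)) =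
          KInd K (↥((({x0} : Set X)) ×ˢ ((⋃ i, V i)ᶜ))) :=
        kInd_of_homeo (sliceHomeo' X x0 _)
      have h2 : KInd K (↥((({x0} : Set X)) ×ˢ ((⋃ i, V i)ᶜ))) ≤
          KInd K (↥((⋃ i, U i)ᶜ : Set (X × Y))) :=
        kInd_le_of_subset_closed
          (isClosed_singleton.prod (isOpen_iUnion fun i => (hVnb.1 i)).isClosed_compl) hsub
      rw [h1, ← heq]
      exact lt_of_le_of_lt h2 hlt
    have hobs : KObs K V ≠ ∅ := hFbad V hVnb hVlt
    obtain ⟨y, hy⟩ := Set.nonempty_iff_ne_empty.2 hobs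
    intro hcon
    have hmem : (x0, y) ∈ KObs K U := by
      intro ⟨W, hWnb, hWmem⟩
      refine hy ⟨fun i => {y' | (x0, y') ∈ W i}, ⟨?_, ?_, ?_⟩, ?_⟩
      · exact fun i => (hWnb.1 i).preimage (continuous_const.prodMk continuous_id)
      · intro I hI hne
        obtain ⟨y', hy'⟩ := hne
        simp only [Set.mem_iInter, Set.mem_setOf_eq] at hy'
        refine hWnb.2.1 I hI ⟨(x0, y'), ?_⟩
        simp only [Set.mem_iInter]
        exact fun i hi => hy' i hi
      · intro i y' hy'
        exact hWnb.2.2 i hy'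
      · obtain ⟨i, hi⟩ := Set.mem_iUnion.1 hWmem
        exact Set.mem_iUnion.2 ⟨i, hi⟩
    rw [hcon] at hmem
    exact hmem

/-- Strongness transfers from `X × Y` to `Y`. -/
theorem kStrongly_of_prod (X Y : Type) [TopologicalSpace X] [TopologicalSpace Y]
    [CompactSpace X] [CompactSpace Y] [T2Space X] [T2Space Y]
    (hX : CovDimLE X 0) (hXne : Nonempty X) (hXY : KStrongly K (X × Y)) :
    KStrongly K Y := by
  obtain ⟨⟨α, hα0, hαXY⟩, G, hGc, hGt, hGbad⟩ := hXY
  have heq : KInd K (X × Y) = KInd K Y := kInd_prod_eq X Y hX hXne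
  have hαY : KInd K Y = Dim.ofOrdinal α := heq.symm.trans hαXY
  by_contra hY'
  -- for every point `x`, the slice tuple has a good neighbourhood
  have hslice : ∀ x : X, ∃ V : Fin m → Set Y,
      KNbhd K (fun i => {y | (x, y) ∈ G i}) V ∧
      KInd K (↥((⋃ i, V i)ᶜ : Set Y)) < KInd K Y ∧ KObs K V = ∅ := by
    intro x
    have hGxc : ∀ i, IsClosed {y | (x, y) ∈ G i} :=
      fun i => (hGc i).preimage (continuous_const.prodMk continuous_id)
    have hGxt : IsKTuple K (fun i => {y | (x, y) ∈ G i}) := by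
      intro I hI hne
      obtain ⟨y, hy⟩ := hne
      simp only [Set.mem_iInter, Set.mem_setOf_eq] at hy
      refine hGt I hI ⟨(x, y), ?_⟩
      simp only [Set.mem_iInter]
      exact fun i hi => hy i hi
    have hnot : ¬ ∀ U, KNbhd K (fun i => {y | (x, y) ∈ G i}) U →
        KInd K (↥((⋃ i, U i)ᶜ : Set Y)) < KInd K Y → KObs K U ≠ ∅ := by
      intro hbad
      exact hY' ⟨⟨α, hα0, hαY⟩, _, hGxc, hGxt, hbad⟩
    push_neg at hnot
    obtain ⟨V, h1, h2, h3⟩ := hnot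
    exact ⟨V, h1, h2, h3⟩
  choose V hVnb hVlt hVobs using hslice
  -- tubes and a disjoint clopen refinement
  set O : X → Set X := fun x => ⋂ i, {x' : X | ∀ y : Y, (x', y) ∈ G i → y ∈ V x i}
    with hOdef
  have hOo : ∀ x, IsOpen (O x) := fun x =>
    isOpen_iInter_of_finite fun i => isOpen_tubeSet (hGc i) (hVnb x |>.1 i)
  have hOx : ∀ x, x ∈ O x := fun x =>
    Set.mem_iInter.2 fun i y hy => (hVnb x).2.2 i hy
  obtain ⟨t, ht⟩ := isCompact_univ.elim_finite_subcover O hOo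
    (fun x _ => Set.mem_iUnion.2 ⟨x, hOx x⟩)
  have hcov : (⋃ j : ↥t, O ↑j) = Set.univ := by
    apply Set.eq_univ_of_univ_subset
    intro x hx
    have := ht (Set.mem_univ x)
    simp only [Set.mem_iUnion] at this
    obtain ⟨a, ha, haO⟩ := this
    exact Set.mem_iUnion.2 ⟨⟨a, ha⟩, haO⟩
  obtain ⟨C, hCclop, hCsub, hCcov, hCdisj⟩ :=
    covDimLE_zero_disjoint hX (fun j : ↥t => O ↑j) (fun j => hOo ↑j) hcov
  have hmemC : ∀ x : X, ∃ j, x ∈ C j := by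
    intro x
    have : x ∈ ⋃ j, C j := hCcov ▸ Set.mem_univ x
    simpa using this
  have hjeq : ∀ {j k : ↥t} {x : X}, x ∈ C j → x ∈ C k → j = k := by
    intro j k x hj hk
    by_contra hne
    exact Set.disjoint_left.1 (hCdisj j k hne) hj hk
  set U : Fin m → Set (X × Y) := fun i => ⋃ j : ↥t, (C j) ×ˢ (V ↑j i) with hUdef
  have hUnb : KNbhd K G U := by
    refine ⟨fun i => isOpen_iUnion fun j => ((hCclop j).2).prod ((hVnb ↑j).1 i), ?_, ?_⟩
    · intro I hI hne
      obtain ⟨z, hz⟩ := hne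
      simp only [Set.mem_iInter] at hz
      have hI2 := hI
      obtain ⟨i0, hi0⟩ := hI2
      obtain ⟨j0, hj0⟩ := Set.mem_iUnion.1 (hz i0 hi0)
      have hx0' : z.1 ∈ C j0 := hj0.1
      refine (hVnb ↑j0).2.1 I hI ⟨z.2, ?_⟩
      simp only [Set.mem_iInter]
      intro i hi
      obtain ⟨j', hj'⟩ := Set.mem_iUnion.1 (hz i hi)
      have : j' = j0 := hjeq hj'.1 hx0'
      exact this ▸ hj'.2
    · intro i z hz
      obtain ⟨j, hj⟩ := hmemC z.1
      have hzV : z.2 ∈ V ↑j i := Set.mem_iInter.1 (hCsub j hj) i z.2 hz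
      exact Set.mem_iUnion.2 ⟨j, ⟨hj, hzV⟩⟩
  set S : Set (X × Y) := (⋃ i, U i)ᶜ with hSdef
  have hSj : ∀ j : ↥t, S ∩ ((C j) ×ˢ (Set.univ : Set Y)) =
      (C j) ×ˢ ((⋃ i, V ↑j i)ᶜ) := by
    intro j
    ext z
    constructor
    · rintro ⟨hzS, hzC, -⟩
      refine ⟨hzC, ?_⟩
      intro hmem
      obtain ⟨i, hi⟩ := Set.mem_iUnion.1 hmem
      exact hzS (Set.mem_iUnion.2 ⟨i, Set.mem_iUnion.2 ⟨j, ⟨hzC, hi⟩⟩⟩)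
    · rintro ⟨hzC, hzP⟩
      refine ⟨?_, hzC, Set.mem_univ _⟩
      intro hmem
      obtain ⟨i, hi⟩ := Set.mem_iUnion.1 hmem
      obtain ⟨j', hj'⟩ := Set.mem_iUnion.1 hi
      have : j' = j := hjeq hj'.1 hzC
      subst this
      exact hzP (Set.mem_iUnion.2 ⟨i, hj'.2⟩)
  have hlt : KInd K (↥S) < KInd K (X × Y) := by
    have hBj : ∀ j : ↥t, ∃ β, β < α ∧ KIndLE K (↥((⋃ i, V ↑j i)ᶜ : Set Y)) β := by
      intro j
      refine kIndLE_of_kInd_lt hα0 ?_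
      rw [← hαY]
      exact hVlt ↑j
    choose b hb hbK using hBj
    set β : Ordinal.{0} := Finset.univ.sup b with hβdef
    have hβα : β < α := by
      refine Finset.sup_lt_iff ?_ |>.2 fun j _ => hb j
      rw [Ordinal.bot_eq_zero]
      exact hα0
    have hSK : KIndLE K (↥S) β := by
      refine kIndLE_clopenUnion β
        (fun j : ↥t => (Subtype.val : ↥S → X × Y) ⁻¹' ((C j) ×ˢ (Set.univ : Set Y)))
        (fun j => ((hCclop j).prod isClopen_univ).preimage continuous_subtype_val)
        ?_ ?_ ?_
      · intro j k hjk
        rw [Set.disjoint_left]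
        rintro z ⟨hj, -⟩ ⟨hk, -⟩
        exact hjk (hjeq hj hk)
      · ext z
        simp only [Set.mem_iUnion, Set.mem_univ, iff_true]
        obtain ⟨j, hj⟩ := hmemC (z : X × Y).1
        exact ⟨j, hj, Set.mem_univ _⟩
      · intro j
        have h2 : Subtype.val ''
            ((Subtype.val : ↥S → X × Y) ⁻¹' ((C j) ×ˢ (Set.univ : Set Y)))
            = (C j) ×ˢ ((⋃ i, V ↑j i)ᶜ) := by
          rw [Subtype.image_preimage_coe, hSj j]
        have h3 : KIndLE K ((↥(C j)) × (↥((⋃ i, V ↑j i)ᶜ : Set Y))) β := by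
          haveI : CompactSpace ↥(C j) := isCompact_iff_compactSpace.1 ((hCclop j).1.isCompact)
          haveI : CompactSpace (↥((⋃ i, V ↑j i)ᶜ : Set Y)) :=
            isCompact_iff_compactSpace.1
              ((isOpen_iUnion fun i => (hVnb ↑j).1 i).isClosed_compl.isCompact)
          exact kIndLE_prod β _ _ (covDimLE_zero_subtype hX (hCclop j))
            (kIndLE_mono (Finset.le_sup (Finset.mem_univ j)) (hbK j))
        exact kIndLE_of_homeo β ((subtypeImageHomeo _ _).trans
          ((Homeomorph.setCongr h2).trans (Homeomorph.Set.prod _ _))) h3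
    have := kIndLE_le_iff.1 hSK
    refine lt_of_le_of_lt this ?_
    rw [hαXY]
    exact Dim.ofOrdinal_lt_ofOrdinal.2 hβα
  have hobs : KObs K U = ∅ := by
    rw [Set.eq_empty_iff_forall_notMem]
    rintro ⟨x, y⟩ hxy
    obtain ⟨j, hj⟩ := hmemC x
    have hy : y ∉ KObs K (V ↑j) := by
      rw [hVobs ↑j]
      exact Set.notMem_empty y
    have hy' : ∃ W, KNbhd K (V ↑j) W ∧ y ∈ ⋃ i, W i := not_not.1 hy
    obtain ⟨W, hWnb, hyW⟩ := hy'
    refine hxy ⟨fun i => ((C j) ×ˢ (W i)) ∪ U i, ⟨?_, ?_, ?_⟩, ?_⟩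
    · exact fun i => (((hCclop j).2).prod (hWnb.1 i)).union (hUnb.1 i)
    · intro I hI hne
      obtain ⟨z, hz⟩ := hne
      simp only [Set.mem_iInter] at hz
      by_cases hzC : z.1 ∈ C j
      · refine hWnb.2.1 I hI ⟨z.2, ?_⟩
        simp only [Set.mem_iInter]
        intro i hi
        rcases hz i hi with hmem | hmem
        · exact hmem.2
        · obtain ⟨j', hj'⟩ := Set.mem_iUnion.1 hmem
          have : j' = j := hjeq hj'.1 hzC
          subst this
          exact hWnb.2.2 i hj'.2
      · refine hUnb.2.1 I hI ⟨z, ?_⟩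
        simp only [Set.mem_iInter]
        intro i hi
        rcases hz i hi with hmem | hmem
        · exact absurd hmem.1 hzC
        · exact hmem
    · intro i z hz
      exact Or.inr hz
    · obtain ⟨i, hi⟩ := Set.mem_iUnion.1 hyW
      exact Set.mem_iUnion.2 ⟨i, Or.inl ⟨hj, hi⟩⟩
  exact hGbad U hUnb hlt hobs

/-- Part (b): `K-str (X × Y) = K-str Y`. -/
theorem kStr_prod_eq (X Y : Type) [TopologicalSpace X] [TopologicalSpace Y]
    [CompactSpace X] [CompactSpace Y] [T2Space X] [T2Space Y]
    (hX : CovDimLE X 0) (hXne : Nonempty X) : KStr K (X × Y) = KStr K Y := by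
  unfold KStr
  by_cases h : KStrongly K Y
  · simp only [h, kStrongly_prod_of X Y hX hXne h, if_true]
  · have h' : ¬ KStrongly K (X × Y) := fun hc => h (kStrongly_of_prod X Y hX hXne hc)
    simp only [h, h', if_false]

end AuxKStr


section AuxL1

variable {L : Type} [TopologicalSpace L]

/-- A continuous map out of an empty space. -/
noncomputable def emptyCMap {Z W : Type} [TopologicalSpace Z] [TopologicalSpace W]
    [IsEmpty Z] : C(Z, W) :=
  ⟨isEmptyElim, by
    rw [continuous_def]
    intro s _
    have : (isEmptyElim : Z → W) ⁻¹' s = ∅ := Set.eq_empty_of_isEmpty _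
    rw [this]
    exact isOpen_empty⟩

theorem lIndLE_iff (X : Type) [tX : TopologicalSpace X] (α : Ordinal.{0}) :
    LIndLE L X α ↔
      ∀ F : Set X, IsClosed F → ∀ f : C(F, L),
        ∃ U : Set X, IsOpen U ∧ ∃ hFU : F ⊆ U,
          (∃ g : C(U, L), ∀ (x : X) (hx : x ∈ F), g ⟨x, hFU hx⟩ = f ⟨x, hx⟩) ∧
          (Uᶜ = (∅ : Set X) ∨ ∃ β, β < α ∧ LIndLE L (↥(Uᶜ)) β) := by
  show LIndLeAux L α X tX ↔ _
  unfold LIndLeAux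
  rw [WellFounded.fix_eq]
  constructor
  · intro h F hF f
    obtain ⟨U, h1, hFU, h3, h4⟩ := h F hF f
    refine ⟨U, h1, hFU, h3, ?_⟩
    rcases h4 with h4 | ⟨β, hβ⟩
    · exact Or.inl h4
    · exact Or.inr ⟨β.1, β.2, hβ⟩
  · intro h F hF f
    obtain ⟨U, h1, hFU, h3, h4⟩ := h F hF f
    refine ⟨U, h1, hFU, h3, ?_⟩
    rcases h4 with h4 | ⟨β, hβ, hh⟩
    · exact Or.inl h4
    · exact Or.inr ⟨⟨β, hβ⟩, hh⟩

theorem lIndLE_mono {X : Type} [TopologicalSpace X] {α α' : Ordinal.{0}} (h : α ≤ α')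
    (hX : LIndLE L X α) : LIndLE L X α' := by
  rw [lIndLE_iff] at hX ⊢
  intro F hF f
  obtain ⟨U, h1, hFU, h3, h4⟩ := hX F hF f
  refine ⟨U, h1, hFU, h3, ?_⟩
  rcases h4 with h4 | ⟨β, hβ, hh⟩
  · exact Or.inl h4
  · exact Or.inr ⟨β, lt_of_lt_of_le hβ h, hh⟩

theorem lIndLE_of_isEmpty (X : Type) [TopologicalSpace X] [IsEmpty X] (α : Ordinal.{0}) :
    LIndLE L X α := by
  rw [lIndLE_iff]
  intro F hF f
  have hFU : F ⊆ (∅ : Set X) := fun x hx => isEmptyElim x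
  haveI : IsEmpty (↥(∅ : Set X)) := Set.isEmpty_coe_sort.2 rfl
  have hg : ∀ (x : X) (hx : x ∈ F),
      (emptyCMap : C(↥(∅ : Set X), L)) ⟨x, hFU hx⟩ = f ⟨x, hx⟩ :=
    fun x hx => (IsEmpty.false x).elim
  have hcomp : ((∅ : Set X)ᶜ : Set X) = ∅ := by
    rw [Set.compl_empty]
    exact Set.eq_empty_of_isEmpty _
  exact ⟨∅, isOpen_empty, hFU, ⟨emptyCMap, hg⟩, Or.inl hcomp⟩

theorem lIndLE_of_homeo (α : Ordinal.{0}) :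
    ∀ {Z W : Type} [TopologicalSpace Z] [TopologicalSpace W],
      (Z ≃ₜ W) → LIndLE L W α → LIndLE L Z α := by
  induction α using Ordinal.induction with
  | _ α IH =>
    intro Z W _ _ e hW
    rw [lIndLE_iff] at hW ⊢
    intro F hF f
    have hmemτ : ∀ w : ↥(e '' F), e.symm ↑w ∈ F := by
      intro w
      obtain ⟨z, hz, hze⟩ := w.2
      rw [← hze]
      simpa using hz
    set τ : ↥(e '' F) → ↥F := fun w => ⟨e.symm ↑w, hmemτ w⟩ with hτdef
    have hτc : Continuous τ :=
      Continuous.subtype_mk (e.symm.continuous.comp continuous_subtype_val) _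
    obtain ⟨U, hUo, hFU, ⟨g, hg⟩, hcomp⟩ := hW (e '' F) (e.isClosedMap _ hF) (f.comp ⟨τ, hτc⟩)
    have hFU' : F ⊆ e ⁻¹' U := fun z hz => hFU ⟨z, hz, rfl⟩
    refine ⟨e ⁻¹' U, hUo.preimage e.continuous, hFU', ?_, ?_⟩
    · refine ⟨g.comp ⟨fun z' => (⟨e ↑z', z'.2⟩ : ↥U),
        Continuous.subtype_mk (e.continuous.comp continuous_subtype_val) _⟩, ?_⟩
      intro x hx
      have h1 : g ⟨e x, hFU ⟨x, hx, rfl⟩⟩ = f (τ ⟨e x, ⟨x, hx, rfl⟩⟩) := hg (e x) ⟨x, hx, rfl⟩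
      have h2 : τ ⟨e x, ⟨x, hx, rfl⟩⟩ = ⟨x, hx⟩ := Subtype.ext (by simp [hτdef])
      simp only [ContinuousMap.comp_apply]
      rw [← h2]
      exact h1
    · have hset : (e ⁻¹' U)ᶜ = e ⁻¹' (Uᶜ) := by rw [Set.preimage_compl]
      rw [hset]
      rcases hcomp with hc | ⟨β, hβ, hc⟩
      · rw [hc]
        exact Or.inl Set.preimage_empty
      · refine Or.inr ⟨β, hβ, ?_⟩
        refine IH β hβ ?_ hc
        exact (e.image _).trans (Homeomorph.setCongr (Set.image_preimage_eq _ e.surjective))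

theorem lIndLE_closed (α : Ordinal.{0}) :
    ∀ {Z : Type} [TopologicalSpace Z] {C : Set Z},
      IsClosed C → LIndLE L Z α → LIndLE L (↥C) α := by
  induction α using Ordinal.induction with
  | _ α IH =>
    intro Z _ C hC hZ
    rw [lIndLE_iff] at hZ ⊢
    intro F hF f
    have hmem1 : ∀ w : ↥(Subtype.val '' F), (w : Z) ∈ C := by
      intro w
      obtain ⟨z, hz, hze⟩ := w.2
      exact hze ▸ z.2
    have hmem2 : ∀ w : ↥(Subtype.val '' F), (⟨(w : Z), hmem1 w⟩ : ↥C) ∈ F := by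
      intro w
      obtain ⟨z, hz, hze⟩ := w.2
      have : z = ⟨(w : Z), hmem1 w⟩ := Subtype.ext hze
      exact this ▸ hz
    set τ : ↥(Subtype.val '' F) → ↥F := fun w => ⟨⟨(w : Z), hmem1 w⟩, hmem2 w⟩ with hτdef
    have hτc : Continuous τ :=
      Continuous.subtype_mk (Continuous.subtype_mk continuous_subtype_val _) _
    obtain ⟨U, hUo, hFU, ⟨g, hg⟩, hcomp⟩ := hZ (Subtype.val '' F)
      (hC.isClosedEmbedding_subtypeVal.isClosedMap _ hF) (f.comp ⟨τ, hτc⟩)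
    have hFU' : F ⊆ Subtype.val ⁻¹' U := fun z hz => hFU ⟨z, hz, rfl⟩
    refine ⟨Subtype.val ⁻¹' U, hUo.preimage continuous_subtype_val, hFU', ?_, ?_⟩
    · refine ⟨g.comp ⟨fun w => (⟨↑↑w, w.2⟩ : ↥U),
        Continuous.subtype_mk (continuous_subtype_val.comp continuous_subtype_val) _⟩, ?_⟩
      intro x hx
      have h1 : g ⟨↑x, hFU ⟨x, hx, rfl⟩⟩ = f (τ ⟨↑x, ⟨x, hx, rfl⟩⟩) := hg (↑x) ⟨x, hx, rfl⟩
      have h2 : τ ⟨↑x, ⟨x, hx, rfl⟩⟩ = ⟨x, hx⟩ := Subtype.ext (Subtype.ext rfl)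
      simp only [ContinuousMap.comp_apply]
      rw [← h2]
      exact h1
    · have hset : (Subtype.val ⁻¹' U)ᶜ = (Subtype.val : ↥C → Z) ⁻¹' (Uᶜ) := by
        rw [Set.preimage_compl]
      rw [hset]
      rcases hcomp with hc | ⟨β, hβ, hc⟩
      · rw [hc]
        exact Or.inl Set.preimage_empty
      · set S := Uᶜ with hSdef
        refine Or.inr ⟨β, hβ, ?_⟩
        have h1 : LIndLE L (↥((Subtype.val : ↥S → Z) ⁻¹' C)) β :=
          IH β hβ (hC.preimage continuous_subtype_val) hc
        have h2 : Subtype.val '' ((Subtype.val : ↥C → Z) ⁻¹' S) =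
            Subtype.val '' ((Subtype.val : ↥S → Z) ⁻¹' C) := by
          rw [Subtype.image_preimage_coe, Subtype.image_preimage_coe, Set.inter_comm]
        exact lIndLE_of_homeo β ((subtypeImageHomeo _ _).trans
          ((Homeomorph.setCongr h2).trans (subtypeImageHomeo _ _).symm)) h1

end AuxL1

section AuxGlue

/-- Gluing continuous maps over a disjoint open cover. -/
theorem glue_openCover {Z W : Type} [TopologicalSpace Z] [TopologicalSpace W] {ι : Type}
    (D : ι → Set Z) (hDo : ∀ j, IsOpen (D j))
    (hdisj : ∀ j k, j ≠ k → Disjoint (D j) (D k)) (hcov : (⋃ j, D j) = Set.univ)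
    (k : ∀ j, C(↥(D j), W)) :
    ∃ g : C(Z, W), ∀ (j : ι) (z : ↥(D j)), g ↑z = k j z := by
  have hmem : ∀ z : Z, ∃ j, z ∈ D j := by
    intro z
    have : z ∈ ⋃ j, D j := hcov ▸ Set.mem_univ z
    simpa using this
  have hjeq : ∀ {j j' : ι} {z : Z}, z ∈ D j → z ∈ D j' → j = j' := by
    intro j j' z hj hj'
    by_contra hne
    exact Set.disjoint_left.1 (hdisj j j' hne) hj hj'
  set jz : Z → ι := fun z => (hmem z).choose with hjz
  have hjzmem : ∀ z, z ∈ D (jz z) := fun z => (hmem z).choose_spec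
  set g : Z → W := fun z => k (jz z) ⟨z, hjzmem z⟩ with hgdef
  have hglue : ∀ (j : ι) (z : ↥(D j)), g ↑z = k j z := by
    intro j z
    obtain ⟨zv, hz⟩ := z
    have hje : jz zv = j := hjeq (hjzmem zv) hz
    subst hje
    rfl
  refine ⟨⟨g, ?_⟩, hglue⟩
  rw [continuous_def]
  intro s hs
  have hset : g ⁻¹' s = ⋃ j, Subtype.val '' ((k j) ⁻¹' s) := by
    ext z
    simp only [Set.mem_preimage, Set.mem_iUnion]
    constructor
    · intro hz
      exact ⟨jz z, ⟨z, hjzmem z⟩, hz, rfl⟩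
    · rintro ⟨j, w, hw, hwe⟩
      have h1 : g ↑w = k j w := hglue j w
      rw [hwe] at h1
      rw [h1]
      exact hw
  rw [hset]
  exact isOpen_iUnion fun j =>
    ((hDo j).isOpenEmbedding_subtypeVal).isOpenMap _ ((k j).continuous.isOpen_preimage s hs)

end AuxGlue

section AuxL2

variable {L : Type} [TopologicalSpace L]

theorem lIndLE_clopenUnion (α : Ordinal.{0}) :
    ∀ {Z : Type} [TopologicalSpace Z] {ι : Type} [Fintype ι] (D : ι → Set Z),
      (∀ j, IsClopen (D j)) → (∀ j k, j ≠ k → Disjoint (D j) (D k)) →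
      (⋃ j, D j) = Set.univ → (∀ j, LIndLE L (↥(D j)) α) → LIndLE L Z α := by
  induction α using Ordinal.induction with
  | _ α IH =>
    intro Z _ ι _ D hD hDd hDc hDL
    rw [lIndLE_iff]
    intro F hF f
    have hmemD : ∀ z : Z, ∃ j, z ∈ D j := by
      intro z
      have : z ∈ ⋃ j, D j := hDc ▸ Set.mem_univ z
      simpa using this
    have hjeq : ∀ {j k : ι} {z : Z}, z ∈ D j → z ∈ D k → j = k := by
      intro j k z hj hk
      by_contra hne
      exact Set.disjoint_left.1 (hDd j k hne) hj hk
    -- restrict the map to each piece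
    have hpull : ∀ j, ∃ U' : Set (↥(D j)), IsOpen U' ∧
        ∃ hFU : (Subtype.val ⁻¹' F) ⊆ U',
          (∃ g : C(U', L), ∀ (x : ↥(D j)) (hx : x ∈ Subtype.val ⁻¹' F),
            g ⟨x, hFU hx⟩ = f ⟨↑x, hx⟩) ∧
          ((U'ᶜ : Set ↥(D j)) = ∅ ∨ ∃ β, β < α ∧ LIndLE L (↥(U'ᶜ : Set ↥(D j))) β) := by
      intro j
      exact (lIndLE_iff _ α).1 (hDL j) (Subtype.val ⁻¹' F)
        (hF.preimage continuous_subtype_val)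
        (f.comp ⟨fun w => ⟨↑↑w, w.2⟩,
          Continuous.subtype_mk (continuous_subtype_val.comp continuous_subtype_val) _⟩)
    choose U' hU'o hU's hU'g hU'c using hpull
    set U : Set Z := ⋃ j, Subtype.val '' (U' j) with hUdef
    have hUD : ∀ j, Subtype.val '' (U' j) ⊆ D j := by
      intro j z hz
      obtain ⟨w, -, rfl⟩ := hz
      exact w.2
    have hUo : IsOpen U := isOpen_iUnion fun j =>
      ((hD j).2.isOpenEmbedding_subtypeVal).isOpenMap _ (hU'o j)
    have hkey : ∀ (z : Z) (hz : z ∈ U) (j : ι) (hzD : z ∈ D j), (⟨z, hzD⟩ : ↥(D j)) ∈ U' j := by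
      intro z hz j hzD
      obtain ⟨j', hj'⟩ := Set.mem_iUnion.1 hz
      have : j' = j := hjeq (hUD j' hj') hzD
      subst this
      obtain ⟨w, hw, hwe⟩ := hj'
      have : w = ⟨z, hzD⟩ := Subtype.ext hwe
      exact this ▸ hw
    have hFU : F ⊆ U := by
      intro z hz
      obtain ⟨j, hj⟩ := hmemD z
      exact Set.mem_iUnion.2 ⟨j, ⟨⟨z, hj⟩, hU's j hz, rfl⟩⟩
    refine ⟨U, hUo, hFU, ?_, ?_⟩
    · -- glue the extensions
      set D' : ι → Set (↥U) := fun j => (Subtype.val : ↥U → Z) ⁻¹' (D j) with hD'def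
      have hD'o : ∀ j, IsOpen (D' j) := fun j => (hD j).2.preimage continuous_subtype_val
      have hD'd : ∀ j k, j ≠ k → Disjoint (D' j) (D' k) := by
        intro j k hjk
        rw [Set.disjoint_left]
        intro z hj hk
        exact hjk (hjeq hj hk)
      have hD'c : (⋃ j, D' j) = Set.univ := by
        ext z
        simp only [Set.mem_iUnion, Set.mem_univ, iff_true]
        exact hmemD ↑z
      set kj : ∀ j, C(↥(D' j), L) := fun j => (hU'g j).choose.comp
        ⟨fun w => (⟨⟨((w : ↥U) : Z), w.2⟩, hkey ((w : ↥U) : Z) (w : ↥U).2 j w.2⟩ : ↥(U' j)),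
          Continuous.subtype_mk
            (Continuous.subtype_mk (continuous_subtype_val.comp continuous_subtype_val) _) _⟩
        with hkjdef
      obtain ⟨g, hg⟩ := glue_openCover D' hD'o hD'd hD'c kj
      refine ⟨g, ?_⟩
      intro x hx
      obtain ⟨j, hj⟩ := hmemD x
      have hj' : (⟨x, hFU hx⟩ : ↥U) ∈ D' j := hj
      have h1 := hg j ⟨⟨x, hFU hx⟩, hj'⟩
      have h2 : kj j ⟨⟨x, hFU hx⟩, hj'⟩ = f ⟨x, hx⟩ :=
        (hU'g j).choose_spec ⟨x, hj⟩ hx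
      exact h1.trans h2
    · -- the complement
      set S : Set Z := Uᶜ with hSdef
      have hSj : ∀ j, S ∩ D j = Subtype.val '' ((U' j)ᶜ : Set ↥(D j)) := by
        intro j
        ext z
        constructor
        · rintro ⟨hzS, hzD⟩
          refine ⟨⟨z, hzD⟩, ?_, rfl⟩
          intro hmem
          exact hzS (Set.mem_iUnion.2 ⟨j, ⟨⟨z, hzD⟩, hmem, rfl⟩⟩)
        · rintro ⟨w, hw, rfl⟩
          refine ⟨?_, w.2⟩
          intro hmem
          exact hw (hkey ↑w hmem j w.2)
      by_cases hS : S = ∅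
      · exact Or.inl hS
      · obtain ⟨z0, hz0⟩ := Set.nonempty_iff_ne_empty.2 hS
        obtain ⟨j0, hj0⟩ := hmemD z0
        have hne0 : ((U' j0)ᶜ : Set ↥(D j0)) ≠ ∅ := by
          intro hcon
          have hmm : z0 ∈ S ∩ D j0 := ⟨hz0, hj0⟩
          rw [hSj j0, hcon] at hmm
          simpa using hmm
        have hα : 0 < α := by
          rcases hU'c j0 with hc | ⟨β, hβ, -⟩
          · exact absurd hc hne0
          · exact lt_of_le_of_lt (zero_le : 0 ≤ β) hβ
        have hBj : ∀ j, ∃ β, β < α ∧ LIndLE L (↥((U' j)ᶜ : Set ↥(D j))) β := by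
          intro j
          rcases hU'c j with hc | h
          · refine ⟨0, hα, ?_⟩
            haveI : IsEmpty (↥((U' j)ᶜ : Set ↥(D j))) := Set.isEmpty_coe_sort.2 hc
            exact lIndLE_of_isEmpty _ _
          · exact h
        choose b hb hbL using hBj
        set β : Ordinal.{0} := Finset.univ.sup b with hβdef
        have hβα : β < α := by
          refine Finset.sup_lt_iff ?_ |>.2 fun j _ => hb j
          rw [Ordinal.bot_eq_zero]
          exact hα
        refine Or.inr ⟨β, hβα, ?_⟩
        refine IH β hβα (fun j => (Subtype.val : ↥S → Z) ⁻¹' D j)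
          (fun j => (hD j).preimage continuous_subtype_val) ?_ ?_ ?_
        · intro j k hjk
          rw [Set.disjoint_left]
          intro z hj hk
          exact hjk (hjeq hj hk)
        · ext z
          simp only [Set.mem_iUnion, Set.mem_univ, iff_true]
          exact hmemD ↑z
        · intro j
          have h2 : Subtype.val '' ((Subtype.val : ↥S → Z) ⁻¹' D j) =
              Subtype.val '' ((U' j)ᶜ : Set ↥(D j)) := by
            rw [Subtype.image_preimage_coe, ← hSj j]
          refine lIndLE_of_homeo β ((subtypeImageHomeo _ _).trans
            ((Homeomorph.setCongr h2).trans (subtypeImageHomeo _ _).symm)) ?_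
          exact lIndLE_mono (Finset.le_sup (Finset.mem_univ j)) (hbL j)

end AuxL2


section AuxANR

/-- The metric we use on `ℕ → ℝ`. -/
noncomputable def piMetric : MetricSpace (ℕ → ℝ) := PiCountable.metricSpace

/-- The corresponding distance function. -/
noncomputable def piDist (x y : ℕ → ℝ) : ℝ := @dist _ piMetric.toDist x y

theorem piDist_eq (x y : ℕ → ℝ) :
    piDist x y = ∑' n : ℕ, min ((1/2) ^ (Encodable.encode n) : ℝ) (dist (x n) (y n)) := by
  rw [one_div]; rfl

theorem piDist_self (a : ℕ → ℝ) : piDist a a = 0 := @dist_self _ piMetric.toPseudoMetricSpace a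

theorem piDist_continuous : Continuous fun p : (ℕ → ℝ) × (ℕ → ℝ) => piDist p.1 p.2 :=
  @continuous_dist _ piMetric.toPseudoMetricSpace

theorem piDist_seg (a b : ℕ → ℝ) (t : ℝ) (h0 : 0 ≤ t) (h1 : t ≤ 1) :
    piDist (a + t • (b - a)) b ≤ piDist a b := by
  rw [piDist_eq, piDist_eq]
  refine Summable.tsum_le_tsum ?_ (by simpa [one_div] using PiCountable.dist_summable (F := fun _ : ℕ => ℝ) _ _)
    (by simpa [one_div] using PiCountable.dist_summable (F := fun _ : ℕ => ℝ) _ _)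
  intro n
  refine min_le_min le_rfl ?_
  have h2 : (a + t • (b - a)) n = a n + t * (b n - a n) := rfl
  rw [Real.dist_eq, Real.dist_eq, h2]
  have h3 : a n + t * (b n - a n) - b n = (1 - t) * (a n - b n) := by ring
  rw [h3, abs_mul, abs_of_nonneg (by linarith : (0:ℝ) ≤ 1 - t)]
  nlinarith [abs_nonneg (a n - b n)]

/-- The data extracted from the ANR assumption: an embedding of `L` into `ℕ → ℝ`,
a retraction of a neighbourhood, and a Lebesgue number. -/
theorem anr_package (L : Type) [MetricSpace L] [CompactSpace L] [Nonempty L]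
    (hANR : IsANR L) :
    ∃ (ι : L → (ℕ → ℝ)) (O : Set (ℕ → ℝ)) (r : C(↥O, L)) (ε : ℝ),
      Continuous ι ∧ Function.Injective ι ∧ 0 < ε ∧
      (∀ (l : L) (p : ι l ∈ O), r ⟨ι l, p⟩ = l) ∧
      (∀ (l : L) (q : ℕ → ℝ), piDist q (ι l) < ε → q ∈ O) := by
  set u : ℕ → L := TopologicalSpace.denseSeq L with hudef
  set ι : L → (ℕ → ℝ) := fun x n => dist x (u n) with hιdef
  have hιc : Continuous ι := continuous_pi fun n => Continuous.dist continuous_id continuous_const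
  have hιinj : Function.Injective ι := by
    intro x y hxy
    have hd : ∀ n, dist x (u n) = dist y (u n) := fun n => congrFun hxy n
    by_contra hne
    have hpos : 0 < dist x y := dist_pos.2 hne
    obtain ⟨n, hn⟩ := Metric.denseRange_iff.1 (TopologicalSpace.denseRange_denseSeq L) x
      (dist x y / 3) (by linarith)
    have h1 : dist y (u n) = dist x (u n) := (hd n).symm
    have h2 : dist x y ≤ dist x (u n) + dist (u n) y := dist_triangle _ _ _
    rw [dist_comm (u n) y, h1] at h2
    linarith
  letI : MetricSpace (ℕ → ℝ) := piMetric
  have hclosed : IsClosedEmbedding ι := hιc.isClosedEmbedding hιinj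
  have hA : IsClosed (Set.range ι) := hclosed.isClosed_range
  set e : ↥(Set.range ι) ≃ₜ L := (hclosed.isEmbedding.toHomeomorph).symm
    with hedef
  obtain ⟨O, hOo, hAO, r, hr⟩ := hANR.2 (ℕ → ℝ) (Set.range ι) hA e
  have hrl : ∀ (l : L) (p : ι l ∈ O), r ⟨ι l, p⟩ = l := by
    intro l p
    have h1 := hr (ι l) ⟨l, rfl⟩
    have h3 : e.symm l = ⟨ι l, ⟨l, rfl⟩⟩ := Subtype.ext rfl
    have h2 : e ⟨ι l, (⟨l, rfl⟩ : ι l ∈ Set.range ι)⟩ = l := by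
      rw [← h3, Homeomorph.apply_symm_apply]
    exact h1.trans h2
  have hcomp : IsCompact (Set.range ι) := isCompact_range hιc
  obtain ⟨δ, hδ, hthick⟩ := hcomp.exists_thickening_subset_open hOo hAO
  refine ⟨ι, O, r, δ, hιc, hιinj, hδ, hrl, ?_⟩
  intro l q hq
  have hball : q ∈ Metric.ball (ι l) δ := by
    rw [Metric.mem_ball]
    exact hq
  exact hthick (Metric.ball_subset_thickening (E := Set.range ι) (Set.mem_range_self l) δ hball)

/-- The key extension lemma: a map into `L` that is uniformly close on a closed
set `A` to (the values on `A` of) a map into the embedded copy of `L` can be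
modified into a map agreeing with the prescribed values on `A`. -/
theorem anr_key {Z' L : Type} [TopologicalSpace Z'] [TopologicalSpace L]
    (ι : L → (ℕ → ℝ)) (hιc : Continuous ι)
    (O : Set (ℕ → ℝ)) (r : C(↥O, L)) (ε : ℝ) (hε : 0 < ε)
    (hr : ∀ (l : L) (p : ι l ∈ O), r ⟨ι l, p⟩ = l)
    (hball : ∀ (l : L) (q : ℕ → ℝ), piDist q (ι l) < ε → q ∈ O)
    (A : Set Z') (g : C(Z', ℕ → ℝ)) (h : C(Z', L))
    (hgA : ∀ a ∈ A, g a ∈ Set.range ι)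
    (hclose : ∀ a ∈ A, piDist (g a) (ι (h a)) ≤ 2 * ε / 3) :
    ∃ k : C(Z', L), ∀ a ∈ A, ι (k a) = g a := by
  set d : Z' → ℝ := fun z => piDist (g z) (ι (h z)) with hddef
  have hdc : Continuous d :=
    piDist_continuous.comp (g.continuous.prodMk ((hιc.comp h.continuous)))
  set φ : Z' → ℝ := fun z => min 1 (max 0 ((d z - 2*ε/3) * (3/ε))) with hφdef
  have hφc : Continuous φ :=
    continuous_const.min (continuous_const.max ((hdc.sub continuous_const).mul
      continuous_const))
  have hφ0 : ∀ z, 0 ≤ φ z := fun z => le_min zero_le_one (le_max_left _ _)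
  have hφ1 : ∀ z, φ z ≤ 1 := fun z => min_le_left _ _
  set V : Z' → (ℕ → ℝ) := fun z => g z + φ z • (ι (h z) - g z) with hVdef
  have hVc : Continuous V := by
    apply continuous_pi
    intro n
    show Continuous fun z => (g z + φ z • (ι (h z) - g z)) n
    have h1 : Continuous fun z => g z n := (continuous_apply n).comp g.continuous
    have h2 : Continuous fun z => ι (h z) n := (continuous_apply n).comp (hιc.comp h.continuous)
    have h3 : (fun z => (g z + φ z • (ι (h z) - g z)) n) =
        fun z => g z n + φ z * (ι (h z) n - g z n) := rfl
    rw [h3]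
    exact h1.add (hφc.mul (h2.sub h1))
  have hVO : ∀ z, V z ∈ O := by
    intro z
    by_cases hd : d z < ε
    · refine hball (h z) _ (lt_of_le_of_lt ?_ hd)
      exact piDist_seg _ _ _ (hφ0 z) (hφ1 z)
    · push_neg at hd
      have hφe : φ z = 1 := by
        have h1 : (1:ℝ) ≤ (d z - 2*ε/3) * (3/ε) := by
          have h4 : ε/3 ≤ d z - 2*ε/3 := by linarith
          have h5 : (0:ℝ) < 3/ε := by positivity
          calc (1:ℝ) = (ε/3) * (3/ε) := by field_simp
            _ ≤ (d z - 2*ε/3) * (3/ε) := by nlinarith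
        have h2 : (0:ℝ) ≤ (d z - 2*ε/3) * (3/ε) := le_trans zero_le_one h1
        rw [hφdef]
        simp only
        rw [max_eq_right h2, min_eq_left h1]
      have hVe : V z = ι (h z) := by
        rw [hVdef]
        simp only
        rw [hφe, one_smul]
        funext n
        show g z n + (ι (h z) n - g z n) = ι (h z) n
        ring
      rw [hVe]
      refine hball (h z) _ ?_
      rw [piDist_self]
      exact hε
  set k : C(Z', L) := ⟨fun z => r ⟨V z, hVO z⟩,
    r.continuous.comp (hVc.subtype_mk _)⟩ with hkdef
  refine ⟨k, ?_⟩
  intro a ha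
  obtain ⟨l, hl⟩ := hgA a ha
  have hφa : φ a = 0 := by
    have hda : d a ≤ 2*ε/3 := hclose a ha
    have h1 : (d a - 2*ε/3) * (3/ε) ≤ 0 := by
      have hε3 : (0:ℝ) ≤ 3/ε := by positivity
      have : d a - 2*ε/3 ≤ 0 := by linarith
      exact mul_nonpos_of_nonpos_of_nonneg this hε3
    rw [hφdef]
    simp only
    rw [max_eq_left h1, min_eq_right (zero_le_one)]
  have hVa : V a = g a := by
    rw [hVdef]
    simp only
    rw [hφa, zero_smul, add_zero]
  have hgaO : g a ∈ O := by
    rw [← hVa]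
    exact hVO a
  have h2 : k a = l := by
    show r ⟨V a, hVO a⟩ = l
    have hsub : (⟨V a, hVO a⟩ : ↥O) = ⟨ι l, by rw [hl]; exact hgaO⟩ :=
      Subtype.ext (by show V a = ι l; rw [hVa, hl])
    rw [hsub]
    exact hr l _
  rw [h2, hl]

end AuxANR


section AuxLProd

theorem piDist_triangle (a b c : ℕ → ℝ) : piDist a c ≤ piDist a b + piDist b c :=
  @dist_triangle _ piMetric.toPseudoMetricSpace a b c

theorem piDist_comm (a b : ℕ → ℝ) : piDist a b = piDist b a :=
  @dist_comm _ piMetric.toPseudoMetricSpace a b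

theorem piDist_ball_open (c : ℕ → ℝ) (ρ : ℝ) : IsOpen {p : ℕ → ℝ | piDist p c < ρ} :=
  @Metric.isOpen_ball _ piMetric.toPseudoMetricSpace c ρ

/-- The key product lemma for `L-Ind`. -/
theorem lIndLE_prod {L : Type} [MetricSpace L] [CompactSpace L] [Nonempty L]
    (hANR : IsANR L) (α : Ordinal.{0}) :
    ∀ (X Y : Type) [TopologicalSpace X] [TopologicalSpace Y]
      [CompactSpace X] [CompactSpace Y] [T2Space X] [T2Space Y],
      CovDimLE X 0 → LIndLE L Y α → LIndLE L (X × Y) α := by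
  obtain ⟨ι, O, r, ε, hιc, hιinj, hε, hr, hball⟩ := anr_package L hANR
  induction α using Ordinal.induction with
  | _ α IH =>
    intro X Y _ _ _ _ _ _ hX hY
    rcases isEmpty_or_nonempty (X × Y) with hE | hNE
    · exact lIndLE_of_isEmpty _ _
    rw [lIndLE_iff]
    intro F hF f
    -- Tietze extension of the embedded map
    obtain ⟨ft, hft⟩ := ContinuousMap.exists_restrict_eq (X := X × Y) hF
      ((ContinuousMap.mk ι hιc).comp f)
    have hft' : ∀ w : ↥F, ft ↑w = ι (f w) := fun w => ContinuousMap.congr_fun hft w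
    -- the slice construction at each point of `X`
    have hX0 : ∀ x : X, ∃ (W : Set Y) (O' : Set X), IsOpen W ∧ IsOpen O' ∧ x ∈ O' ∧
        ((Wᶜ : Set Y) = ∅ ∨ ∃ β, β < α ∧ LIndLE L (↥(Wᶜ : Set Y)) β) ∧
        ∃ g : C(↥W, L),
          (∀ x' ∈ O', ∀ (y : Y), (x', y) ∈ F → y ∈ W) ∧
          (∀ x' ∈ O', ∀ (y : Y) (hy : (x', y) ∈ F) (hyW : y ∈ W),
            piDist (ι (f ⟨(x', y), hy⟩)) (ι (g ⟨y, hyW⟩)) ≤ 2 * ε / 3) := by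
      intro x
      set Fx : Set Y := {y | (x, y) ∈ F} with hFxdef
      have hFxc : IsClosed Fx := hF.preimage (continuous_const.prodMk continuous_id)
      set fx : C(↥Fx, L) := f.comp ⟨fun w => ⟨(x, ↑w), w.2⟩,
        Continuous.subtype_mk (continuous_const.prodMk continuous_subtype_val) _⟩ with hfxdef
      obtain ⟨W, hWo, hFW, ⟨g, hg⟩, hWcomp⟩ := (lIndLE_iff Y α).1 hY Fx hFxc fx
      -- the ε-net refinement
      have hnet : ∀ y₀ (hy₀ : y₀ ∈ Fx), ∃ (B B' : Set Y) (O1 : Set X),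
          IsOpen B ∧ IsOpen B' ∧ IsOpen O1 ∧ y₀ ∈ B ∧ y₀ ∈ B' ∧ x ∈ O1 ∧
          (∀ (y : Y) (hyW : y ∈ W), y ∈ B →
            piDist (ι (g ⟨y, hyW⟩)) (ι (f ⟨(x, y₀), hy₀⟩)) < ε / 3) ∧
          (∀ (z : X × Y) (hz : z ∈ F), z.1 ∈ O1 → z.2 ∈ B' →
            piDist (ι (f ⟨z, hz⟩)) (ι (f ⟨(x, y₀), hy₀⟩)) < ε / 3) := by
        intro y₀ hy₀
        set l₀ : L := f ⟨(x, y₀), hy₀⟩ with hl₀def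
        -- continuity of the extension at y₀
        have hq : Continuous fun w : ↥W => ι (g w) := hιc.comp g.continuous
        have hqopen : IsOpen {w : ↥W | piDist (ι (g w)) (ι l₀) < ε / 3} := by
          have := (piDist_ball_open (ι l₀) (ε / 3)).preimage hq
          exact this
        obtain ⟨B, hBo, hBeq⟩ := isOpen_induced_iff.1 hqopen
        have hy₀B : y₀ ∈ B := by
          have hmem : (⟨y₀, hFW hy₀⟩ : ↥W) ∈ {w : ↥W | piDist (ι (g w)) (ι l₀) < ε / 3} := by
            have hgy : g ⟨y₀, hFW hy₀⟩ = l₀ := hg y₀ hy₀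
            simp only [Set.mem_setOf_eq, hgy, piDist_self]
            positivity
          rw [← hBeq] at hmem
          exact hmem
        -- continuity of f at (x, y₀)
        have hp : Continuous fun w : ↥F => ι (f w) := hιc.comp f.continuous
        have hpopen : IsOpen {w : ↥F | piDist (ι (f w)) (ι l₀) < ε / 3} := by
          have := (piDist_ball_open (ι l₀) (ε / 3)).preimage hp
          exact this
        obtain ⟨G, hGo, hGeq⟩ := isOpen_induced_iff.1 hpopen
        have hxy₀G : (x, y₀) ∈ G := by
          have hmem : (⟨(x, y₀), hy₀⟩ : ↥F) ∈ {w : ↥F | piDist (ι (f w)) (ι l₀) < ε / 3} := by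
            simp only [Set.mem_setOf_eq, hl₀def, piDist_self]
            positivity
          rw [← hGeq] at hmem
          exact hmem
        obtain ⟨O1, B', hO1o, hB'o, hxO1, hy₀B', hOB⟩ := isOpen_prod_iff.1 hGo x y₀ hxy₀G
        refine ⟨B, B', O1, hBo, hB'o, hO1o, hy₀B, hy₀B', hxO1, ?_, ?_⟩
        · intro y hyW hyB
          have : (⟨y, hyW⟩ : ↥W) ∈ Subtype.val ⁻¹' B := hyB
          rw [hBeq] at this
          exact this
        · intro z hz hz1 hz2
          have hzG : z ∈ G := hOB (Set.mk_mem_prod hz1 hz2)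
          have : (⟨z, hz⟩ : ↥F) ∈ Subtype.val ⁻¹' G := hzG
          rw [hGeq] at this
          exact this
      choose B B' O1 hBo hB'o hO1o hyB hyB' hxO1 hP1 hP2 using hnet
      -- a finite subcover of the compact slice
      have hFxcomp : IsCompact Fx := hFxc.isCompact
      have hcov : Fx ⊆ ⋃ l : ↥Fx, (B ↑l l.2 ∩ B' ↑l l.2) := by
        intro y hy
        exact Set.mem_iUnion.2 ⟨⟨y, hy⟩, hyB y hy, hyB' y hy⟩
      obtain ⟨t', ht'⟩ := hFxcomp.elim_finite_subcover _
        (fun l : ↥Fx => (hBo ↑l l.2).inter (hB'o ↑l l.2)) hcov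
      set N : Set Y := ⋃ l : ↥t', ((B ((l : ↥Fx) : Y) (l : ↥Fx).2 ∩ B' ((l : ↥Fx) : Y) (l : ↥Fx).2) ∩ W) with hNdef
      have hNo : IsOpen N := isOpen_iUnion fun l =>
        ((hBo _ _).inter (hB'o _ _)).inter hWo
      have hNW : N ⊆ W := by
        intro y hy
        obtain ⟨l, hl⟩ := Set.mem_iUnion.1 hy
        exact hl.2
      set O' : Set X := (⋂ l : ↥t', O1 ((l : ↥Fx) : Y) (l : ↥Fx).2) ∩ {x' | ∀ y : Y, (x', y) ∈ F → y ∈ N}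
        with hO'def
      have hO'o : IsOpen O' :=
        (isOpen_iInter_of_finite fun l => hO1o _ _).inter (isOpen_tubeSet hF hNo)
      have hxO' : x ∈ O' := by
        refine ⟨Set.mem_iInter.2 fun l => hxO1 _ _, ?_⟩
        intro y hy
        have hyFx : y ∈ Fx := hy
        have h6 := ht' hyFx
        obtain ⟨l, hl⟩ := Set.mem_iUnion.1 h6
        obtain ⟨hlmem, hl2⟩ := Set.mem_iUnion.1 hl
        exact Set.mem_iUnion.2 ⟨⟨l, hlmem⟩, hl2, hFW hyFx⟩
      refine ⟨W, O', hWo, hO'o, hxO', hWcomp, g, ?_, ?_⟩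
      · intro x' hx' y hy
        exact hNW (hx'.2 y hy)
      · intro x' hx' y hy hyW
        have hyN : y ∈ N := hx'.2 y hy
        obtain ⟨l, hl⟩ := Set.mem_iUnion.1 hyN
        set y₁ : Y := ((l : ↥Fx) : Y) with hy₁def
        have hy₁ : y₁ ∈ Fx := (l : ↥Fx).2
        have h1 : piDist (ι (f ⟨(x', y), hy⟩)) (ι (f ⟨(x, y₁), hy₁⟩)) < ε / 3 := by
          refine hP2 y₁ hy₁ (x', y) hy ?_ ?_
          · exact Set.mem_iInter.1 hx'.1 l
          · exact hl.1.2
        have h2 : piDist (ι (g ⟨y, hyW⟩)) (ι (f ⟨(x, y₁), hy₁⟩)) < ε / 3 :=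
          hP1 y₁ hy₁ y hyW hl.1.1
        calc piDist (ι (f ⟨(x', y), hy⟩)) (ι (g ⟨y, hyW⟩))
            ≤ piDist (ι (f ⟨(x', y), hy⟩)) (ι (f ⟨(x, y₁), hy₁⟩)) +
              piDist (ι (f ⟨(x, y₁), hy₁⟩)) (ι (g ⟨y, hyW⟩)) := piDist_triangle _ _ _
          _ = piDist (ι (f ⟨(x', y), hy⟩)) (ι (f ⟨(x, y₁), hy₁⟩)) +
              piDist (ι (g ⟨y, hyW⟩)) (ι (f ⟨(x, y₁), hy₁⟩)) := by
              rw [piDist_comm (ι (f ⟨(x, y₁), hy₁⟩))]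
          _ ≤ 2 * ε / 3 := by linarith
    choose W O' hWo hO'o hxO' hWcomp g htube hclo using hX0
    -- a finite disjoint clopen cover of `X` subordinate to the tubes
    obtain ⟨t, ht⟩ := isCompact_univ.elim_finite_subcover O' hO'o
      (fun x _ => Set.mem_iUnion.2 ⟨x, hxO' x⟩)
    have hXcov : (⋃ j : ↥t, O' ↑j) = Set.univ := by
      apply Set.eq_univ_of_univ_subset
      intro x hx
      have := ht (Set.mem_univ x)
      simp only [Set.mem_iUnion] at this
      obtain ⟨a, ha, haO⟩ := this
      exact Set.mem_iUnion.2 ⟨⟨a, ha⟩, haO⟩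
    obtain ⟨C, hCclop, hCsub, hCcov, hCdisj⟩ :=
      covDimLE_zero_disjoint hX (fun j : ↥t => O' ↑j) (fun j => hO'o ↑j) hXcov
    have hmemC : ∀ x : X, ∃ j, x ∈ C j := by
      intro x
      have : x ∈ ⋃ j, C j := hCcov ▸ Set.mem_univ x
      simpa using this
    have hjeq : ∀ {j k : ↥t} {x : X}, x ∈ C j → x ∈ C k → j = k := by
      intro j k x hj hk
      by_contra hne
      exact Set.disjoint_left.1 (hCdisj j k hne) hj hk
    set U : Set (X × Y) := ⋃ j : ↥t, (C j) ×ˢ (W ↑j) with hUdef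
    have hUo : IsOpen U := isOpen_iUnion fun j => ((hCclop j).2).prod (hWo ↑j)
    have hFU : F ⊆ U := by
      rintro ⟨a, b⟩ hz
      obtain ⟨j, hj⟩ := hmemC a
      exact Set.mem_iUnion.2 ⟨j, hj, htube ↑j a (hCsub j hj) b hz⟩
    have hUC : ∀ (z : X × Y), z ∈ U → ∀ j : ↥t, z.1 ∈ C j → z.2 ∈ W ↑j := by
      intro z hz j hzC
      obtain ⟨j', hj'⟩ := Set.mem_iUnion.1 hz
      have : j' = j := hjeq hj'.1 hzC
      subst this
      exact hj'.2
    refine ⟨U, hUo, hFU, ?_, ?_⟩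
    · -- the extension over `U`
      set D' : ↥t → Set (↥U) := fun j => (Subtype.val : ↥U → X × Y) ⁻¹' ((C j) ×ˢ (Set.univ : Set Y))
        with hD'def
      have hD'o : ∀ j, IsOpen (D' j) :=
        fun j => (((hCclop j).2).prod isOpen_univ).preimage continuous_subtype_val
      have hD'd : ∀ j k, j ≠ k → Disjoint (D' j) (D' k) := by
        intro j k hjk
        rw [Set.disjoint_left]
        rintro z ⟨hj, -⟩ ⟨hk, -⟩
        exact hjk (hjeq hj hk)
      have hD'c : (⋃ j, D' j) = Set.univ := by
        ext z
        simp only [Set.mem_iUnion, Set.mem_univ, iff_true]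
        obtain ⟨j, hj⟩ := hmemC (z : X × Y).1
        exact ⟨j, hj, Set.mem_univ _⟩
      -- the piecewise extensions via the ANR machinery
      have hpiece : ∀ j : ↥t, ∃ k : C(↥(D' j), L),
          ∀ w : ↥(D' j), ((w : ↥U) : X × Y) ∈ F → ι (k w) = ft ((w : ↥U) : X × Y) := by
        intro j
        set A : Set (↥(D' j)) := {w | ((w : ↥U) : X × Y) ∈ F} with hAdef
        have hvalc : Continuous fun w : ↥(D' j) => ((w : ↥U) : X × Y) :=
          continuous_subtype_val.comp continuous_subtype_val
        set gAmb : C(↥(D' j), ℕ → ℝ) := ft.comp ⟨_, hvalc⟩ with hgAmbdef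
        have hsnd : ∀ w : ↥(D' j), ((w : ↥U) : X × Y).2 ∈ W ↑j :=
          fun w => hUC _ (w : ↥U).2 j w.2.1
        set hmap : ↥(D' j) → ↥(W ↑j) := fun w => ⟨((w : ↥U) : X × Y).2, hsnd w⟩ with hmapdef
        have hmapc : Continuous hmap :=
          Continuous.subtype_mk (continuous_snd.comp hvalc) _
        set hj : C(↥(D' j), L) := (g ↑j).comp ⟨hmap, hmapc⟩ with hjdef
        have hgA : ∀ a ∈ A, gAmb a ∈ Set.range ι := by
          intro a ha
          refine ⟨f ⟨_, ha⟩, ?_⟩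
          exact (hft' ⟨_, ha⟩).symm
        have hclose : ∀ a ∈ A, piDist (gAmb a) (ι (hj a)) ≤ 2 * ε / 3 := by
          intro a ha
          have h1 : gAmb a = ι (f ⟨((a : ↥U) : X × Y), ha⟩) := hft' ⟨_, ha⟩
          rw [h1]
          have h2 := hclo ↑j (((a : ↥U) : X × Y).1) (hCsub j a.2.1)
            (((a : ↥U) : X × Y).2) ha (hsnd a)
          exact h2
        obtain ⟨k, hk⟩ := anr_key ι hιc O r ε hε hr hball A gAmb hj hgA hclose
        exact ⟨k, fun w hw => hk w hw⟩
      choose kk hkk using hpiece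
      obtain ⟨g', hg'⟩ := glue_openCover D' hD'o hD'd hD'c kk
      refine ⟨g', ?_⟩
      intro z hz
      obtain ⟨j, hj⟩ := hmemC z.1
      have hj' : (⟨z, hFU hz⟩ : ↥U) ∈ D' j := ⟨hj, Set.mem_univ _⟩
      have h1 : g' ⟨z, hFU hz⟩ = kk j ⟨⟨z, hFU hz⟩, hj'⟩ := hg' j ⟨⟨z, hFU hz⟩, hj'⟩
      have h2 : ι (kk j ⟨⟨z, hFU hz⟩, hj'⟩) = ft z := hkk j ⟨⟨z, hFU hz⟩, hj'⟩ hz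
      have h3 : ft z = ι (f ⟨z, hz⟩) := hft' ⟨z, hz⟩
      rw [h1]
      exact hιinj (h2.trans h3)
    · -- the complement
      set S : Set (X × Y) := Uᶜ with hSdef
      have hSj : ∀ j : ↥t, S ∩ ((C j) ×ˢ (Set.univ : Set Y)) =
          (C j) ×ˢ ((W ↑j)ᶜ) := by
        intro j
        ext z
        constructor
        · rintro ⟨hzS, hzC, -⟩
          refine ⟨hzC, ?_⟩
          intro hmem
          exact hzS (Set.mem_iUnion.2 ⟨j, hzC, hmem⟩)
        · rintro ⟨hzC, hzP⟩
          refine ⟨?_, hzC, Set.mem_univ _⟩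
          intro hmem
          exact hzP (hUC z hmem j hzC)
      by_cases hS : S = ∅
      · exact Or.inl hS
      obtain ⟨z0, hz0⟩ := Set.nonempty_iff_ne_empty.2 hS
      obtain ⟨j0, hj0⟩ := hmemC z0.1
      have hne0 : ((W ↑j0)ᶜ : Set Y) ≠ ∅ := by
        intro hcon
        have hmem : z0 ∈ S ∩ ((C j0) ×ˢ (Set.univ : Set Y)) := ⟨hz0, hj0, Set.mem_univ _⟩
        rw [hSj j0] at hmem
        have h5 := hmem.2
        rw [hcon] at h5
        exact h5
      have hα : 0 < α := by
        rcases hWcomp ↑j0 with hc | ⟨β, hβ, -⟩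
        · exact absurd hc hne0
        · exact lt_of_le_of_lt (zero_le : 0 ≤ β) hβ
      have hBj : ∀ j : ↥t, ∃ β, β < α ∧ LIndLE L (↥((W ↑j)ᶜ : Set Y)) β := by
        intro j
        rcases hWcomp ↑j with hc | hgood
        · refine ⟨0, hα, ?_⟩
          haveI : IsEmpty (↥((W (↑j))ᶜ : Set Y)) := Set.isEmpty_coe_sort.2 hc
          exact lIndLE_of_isEmpty _ _
        · exact hgood
      choose b hb hbL using hBj
      set β : Ordinal.{0} := Finset.univ.sup b with hβdef
      have hβα : β < α := by
        refine Finset.sup_lt_iff ?_ |>.2 fun j _ => hb j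
        rw [Ordinal.bot_eq_zero]
        exact hα
      refine Or.inr ⟨β, hβα, ?_⟩
      refine lIndLE_clopenUnion β
        (fun j : ↥t => (Subtype.val : ↥S → X × Y) ⁻¹' ((C j) ×ˢ (Set.univ : Set Y)))
        (fun j => ((hCclop j).prod isClopen_univ).preimage continuous_subtype_val)
        ?_ ?_ ?_
      · intro j k hjk
        rw [Set.disjoint_left]
        rintro z ⟨hj, -⟩ ⟨hk, -⟩
        exact hjk (hjeq hj hk)
      · ext z
        simp only [Set.mem_iUnion, Set.mem_univ, iff_true]
        obtain ⟨j, hj⟩ := hmemC (z : X × Y).1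
        exact ⟨j, hj, Set.mem_univ _⟩
      · intro j
        have h2 : Subtype.val ''
            ((Subtype.val : ↥S → X × Y) ⁻¹' ((C j) ×ˢ (Set.univ : Set Y)))
            = (C j) ×ˢ ((W ↑j)ᶜ) := by
          rw [Subtype.image_preimage_coe, hSj j]
        have h3 : LIndLE L ((↥(C j)) × (↥((W ↑j)ᶜ : Set Y))) β := by
          haveI : CompactSpace ↥(C j) := isCompact_iff_compactSpace.1 ((hCclop j).1.isCompact)
          haveI : CompactSpace (↥((W ↑j)ᶜ : Set Y)) :=
            isCompact_iff_compactSpace.1 ((hWo ↑j).isClosed_compl.isCompact)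
          exact IH β hβα _ _ (covDimLE_zero_subtype hX (hCclop j))
            (lIndLE_mono (Finset.le_sup (Finset.mem_univ j)) (hbL j))
        exact lIndLE_of_homeo β ((subtypeImageHomeo _ _).trans
          ((Homeomorph.setCongr h2).trans (Homeomorph.Set.prod _ _))) h3

end AuxLProd


section AuxLInd

variable {L : Type} [TopologicalSpace L]

theorem lInd_congr {Z W : Type} [TopologicalSpace Z] [TopologicalSpace W]
    (he : IsEmpty Z ↔ IsEmpty W) (hs : ∀ α, LIndLE L Z α ↔ LIndLE L W α) :
    LInd L Z = LInd L W := by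
  unfold LInd
  by_cases hE : IsEmpty Z
  · simp only [hE, he.1 hE, if_true]
  · have hE' : ¬ IsEmpty W := fun hw => hE (he.2 hw)
    simp only [hE, hE', if_false]
    have hsets : {α | LIndLE L Z α} = {α | LIndLE L W α} := Set.ext hs
    by_cases hex : ∃ α, LIndLE L Z α
    · have hex' : ∃ α, LIndLE L W α := by
        obtain ⟨α, hα⟩ := hex
        exact ⟨α, (hs α).1 hα⟩
      simp only [hex, hex', if_true, hsets]
    · have hex' : ¬ ∃ α, LIndLE L W α := by
        intro ⟨α, hα⟩
        exact hex ⟨α, (hs α).2 hα⟩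
      simp only [hex, hex', if_false]

theorem lIndLE_empty_L [IsEmpty L] (α : Ordinal.{0}) :
    ∀ (Z : Type) [TopologicalSpace Z] [Nonempty Z], ¬ LIndLE L Z α := by
  induction α using Ordinal.induction with
  | _ α IH =>
    intro Z _ _ h
    rw [lIndLE_iff] at h
    haveI : IsEmpty (↥(∅ : Set Z)) := Set.isEmpty_coe_sort.2 rfl
    obtain ⟨U, hUo, hFU, ⟨g, -⟩, hcomp⟩ := h ∅ isClosed_empty emptyCMap
    have hU : U = ∅ := by
      by_contra hne
      obtain ⟨u, hu⟩ := Set.nonempty_iff_ne_empty.2 hne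
      exact IsEmpty.false (g ⟨u, hu⟩)
    rcases hcomp with hc | ⟨β, hβ, hc⟩
    · rw [hU, Set.compl_empty] at hc
      exact (not_isEmpty_of_nonempty Z) (Set.univ_eq_empty_iff.1 hc)
    · rw [hU, Set.compl_empty] at hc
      haveI : Nonempty (↥(Set.univ : Set Z)) :=
        ⟨⟨Classical.arbitrary Z, Set.mem_univ _⟩⟩
      exact IH β hβ _ hc

/-- Part (c) for empty `L`. -/
theorem lInd_prod_eq_emptyL [IsEmpty L] (X Y : Type) [TopologicalSpace X]
    [TopologicalSpace Y] (hXne : Nonempty X) : LInd L (X × Y) = LInd L Y := by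
  obtain ⟨x0⟩ := hXne
  refine lInd_congr ⟨fun h => ⟨fun y => h.elim (x0, y)⟩, fun h => ⟨fun z => h.elim z.2⟩⟩
    fun α => ?_
  rcases isEmpty_or_nonempty Y with hY | hY
  · haveI : IsEmpty (X × Y) := ⟨fun z => hY.false z.2⟩
    exact iff_of_true (lIndLE_of_isEmpty _ _) (lIndLE_of_isEmpty _ _)
  · haveI : Nonempty (X × Y) := ⟨(x0, Classical.arbitrary Y)⟩
    exact iff_of_false (lIndLE_empty_L α _) (lIndLE_empty_L α _)

/-- Part (c): `L-Ind (X × Y) = L-Ind Y`. -/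
theorem lInd_prod_eq (L' : Type) [MetricSpace L'] [CompactSpace L'] (hANR : IsANR L')
    (X Y : Type) [TopologicalSpace X] [TopologicalSpace Y]
    [CompactSpace X] [CompactSpace Y] [T2Space X] [T2Space Y]
    (hX : CovDimLE X 0) (hXne : Nonempty X) : LInd L' (X × Y) = LInd L' Y := by
  rcases isEmpty_or_nonempty L' with hL | hL
  · exact lInd_prod_eq_emptyL X Y hXne
  obtain ⟨x0⟩ := hXne
  refine lInd_congr ⟨fun h => ⟨fun y => h.elim (x0, y)⟩, fun h => ⟨fun z => h.elim z.2⟩⟩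
    fun α => ⟨fun h => ?_, fun h => lIndLE_prod hANR α X Y hX h⟩
  have hcl : IsClosed ((({x0} : Set X)) ×ˢ (Set.univ : Set Y)) :=
    isClosed_singleton.prod isClosed_univ
  exact lIndLE_of_homeo α (sliceHomeo X Y x0) (lIndLE_closed α hcl h)

end AuxLInd

-- STATEMENT 9
theorem statement9 (m : ℕ) (K : Finset (Fin m) → Prop) (hK : IsComplex K)
    (L : Type) [MetricSpace L] [CompactSpace L]
    (hANR : IsANR L) (hL : ¬ContractibleSpace L)
    (X Y : Type) [TopologicalSpace X] [TopologicalSpace Y]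
    [CompactSpace X] [CompactSpace Y] [T2Space X] [T2Space Y]
    (h : covDim X = Dim.ofOrdinal 0) :
    KInd K (X × Y) = KInd K Y ∧ KStr K (X × Y) = KStr K Y ∧
      LInd L (X × Y) = LInd L Y := by
  obtain ⟨hXne, hX0⟩ := covDim_zero_iff h
  exact ⟨kInd_prod_eq X Y hX0 hXne, kStr_prod_eq X Y hX0 hXne,
    lInd_prod_eq L hANR X Y hX0 hXne⟩

end
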